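/- arXiv:0712.1142 — 5 statements merged into one kernel-verified Lean document; each statement's English description precedes it below -/
import Mathlib

section
/- Assume T(S) is equicontinuous and every element of T(S) is compatible with a partial order P on Y that satisfies the topological descending chain condition. Then Irr(S) = Cspan({μ ∈ Y : t(μ) = μ for every t ∈ T1(S)}). -/
open Set Filter Topology Pointwise

/-- The set of all finite compositions of elements of `T1`, including the identity. -/
def TS {M : Type*} [AddCommGroup M] (T1 : Set (AddMonoid.End M)) : Set (AddMonoid.End M) :=
  ↑(Submonoid.closure T1)

/-- Smallest topologically closed additive subgroup containing `Z` and stable under `R`. -/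
def Cspan {M : Type*} [AddCommGroup M] [TopologicalSpace M]
    (R : Set (AddMonoid.End M)) (Z : Set M) : Set M :=
  ⋂₀ {N : Set M | Z ⊆ N ∧ IsClosed N ∧ (∃ H : AddSubgroup M, N = ↑H) ∧
      ∀ r ∈ R, ∀ a ∈ N, r a ∈ N}

def IrrS {M : Type*} [AddCommGroup M] (T1 : Set (AddMonoid.End M)) : Set M :=
  {a | ∀ t ∈ TS T1, t a = a}

def IS {M : Type*} [AddCommGroup M] [TopologicalSpace M]
    (T1 : Set (AddMonoid.End M)) : Set M :=
  closure (AddSubgroup.closure {x : M | ∃ a : M, ∃ t ∈ TS T1, x = a - t a} : Set M)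

def Stuck {M : Type*} [AddCommGroup M] (T1 : Set (AddMonoid.End M)) (N : Set M) (a : M) :
    Prop :=
  ∀ t ∈ TS T1, t a ∈ N

def PerE {M : Type*} [AddCommGroup M] (T1 : Set (AddMonoid.End M)) (ε : Set M) : Set M :=
  {a | ∀ t1 ∈ TS T1, ∃ t2 ∈ TS T1, ∃ b ∈ IrrS T1,
    Stuck T1 {x | x - b ∈ ε} (t2 (t1 a))}

def Per {M : Type*} [AddCommGroup M] (T1 : Set (AddMonoid.End M))
    (B : ℕ → AddSubgroup M) : Set M :=
  ⋂ n, PerE T1 (B n)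

def UniqE {M : Type*} [AddCommGroup M] (T1 : Set (AddMonoid.End M)) (ε : Set M) : Set M :=
  {a | ∀ t1 ∈ TS T1, ∀ t2 ∈ TS T1, ∀ b1 ∈ IrrS T1, ∀ b2 ∈ IrrS T1,
    Stuck T1 {x | x - b1 ∈ ε} (t1 a) → Stuck T1 {x | x - b2 ∈ ε} (t2 a) → b1 - b2 ∈ ε}

def RedE {M : Type*} [AddCommGroup M] (T1 : Set (AddMonoid.End M))
    (B : ℕ → AddSubgroup M) (ε : Set M) : Set M :=
  Per T1 B ∩ UniqE T1 ε

def Red {M : Type*} [AddCommGroup M] (T1 : Set (AddMonoid.End M))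
    (B : ℕ → AddSubgroup M) : Set M :=
  ⋂ n, RedE T1 B (B n)

def Equicont {M : Type*} [AddCommGroup M] (T1 : Set (AddMonoid.End M))
    (B : ℕ → AddSubgroup M) : Prop :=
  ∀ n : ℕ, ∃ m : ℕ, ∀ t ∈ TS T1, ∀ a ∈ B m, t a ∈ B n

def DSM {M : Type*} [AddCommGroup M] [TopologicalSpace M]
    (R : Set (AddMonoid.End M)) (Y : Set M) (P : M → M → Prop) (μ : M) : Set M :=
  Cspan R {ν | ν ∈ Y ∧ P ν μ}

def Compatible {M : Type*} [AddCommGroup M] [TopologicalSpace M]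
    (R : Set (AddMonoid.End M)) (Y : Set M) (P : M → M → Prop)
    (t : AddMonoid.End M) : Prop :=
  ∀ μ ∈ Y, t μ = μ ∨ t μ ∈ DSM R Y P μ

def DIS {M : Type*} [AddCommGroup M] [TopologicalSpace M]
    (R : Set (AddMonoid.End M)) (Y : Set M) (P : M → M → Prop)
    (T1 : Set (AddMonoid.End M)) (μ : M) : Set M :=
  Cspan R {x | ∃ ν ∈ Y, P ν μ ∧ ∃ t ∈ T1, x = ν - t ν}

def TDCC {M : Type*} [AddCommGroup M] [TopologicalSpace M]
    (Y : Set M) (P : M → M → Prop) : Prop :=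
  ∀ μ : ℕ → M, (∀ n, μ n ∈ Y) → (∀ n, P (μ (n + 1)) (μ n)) →
    Filter.Tendsto μ Filter.atTop (nhds 0)


section CspanLemmas

variable {M : Type*} [AddCommGroup M] [TopologicalSpace M]
  (R : Set (AddMonoid.End M)) (Z : Set M)

lemma cspan_min {N : Set M} (h1 : Z ⊆ N) (h2 : IsClosed N)
    (h3 : ∃ H : AddSubgroup M, N = ↑H) (h4 : ∀ r ∈ R, ∀ a ∈ N, r a ∈ N) :
    Cspan R Z ⊆ N :=
  Set.sInter_subset_of_mem ⟨h1, h2, h3, h4⟩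

lemma subset_cspan : Z ⊆ Cspan R Z := fun _ hx =>
  Set.mem_sInter.mpr fun _ hN => hN.1 hx

lemma cspan_isClosed : IsClosed (Cspan R Z) :=
  isClosed_sInter fun _ hN => hN.2.1

lemma cspan_zero_mem : (0 : M) ∈ Cspan R Z :=
  Set.mem_sInter.mpr fun N hN => by
    obtain ⟨-, -, ⟨H, rfl⟩, -⟩ := hN; exact H.zero_mem

lemma cspan_add_mem {a b : M} (ha : a ∈ Cspan R Z) (hb : b ∈ Cspan R Z) :
    a + b ∈ Cspan R Z :=
  Set.mem_sInter.mpr fun N hN => by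
    obtain ⟨h1, h2, ⟨H, rfl⟩, h4⟩ := hN
    exact H.add_mem (Set.mem_sInter.mp ha _ ⟨h1, h2, ⟨H, rfl⟩, h4⟩)
      (Set.mem_sInter.mp hb _ ⟨h1, h2, ⟨H, rfl⟩, h4⟩)

lemma cspan_neg_mem {a : M} (ha : a ∈ Cspan R Z) : -a ∈ Cspan R Z :=
  Set.mem_sInter.mpr fun N hN => by
    obtain ⟨h1, h2, ⟨H, rfl⟩, h4⟩ := hN
    exact H.neg_mem (Set.mem_sInter.mp ha _ ⟨h1, h2, ⟨H, rfl⟩, h4⟩)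

lemma cspan_r_mem {r : AddMonoid.End M} (hr : r ∈ R) {a : M} (ha : a ∈ Cspan R Z) :
    r a ∈ Cspan R Z :=
  Set.mem_sInter.mpr fun N hN => hN.2.2.2 r hr a (Set.mem_sInter.mp ha _ hN)

def cspanAddSubgroup : AddSubgroup M where
  carrier := Cspan R Z
  zero_mem' := cspan_zero_mem R Z
  add_mem' := fun ha hb => cspan_add_mem R Z ha hb
  neg_mem' := fun ha => cspan_neg_mem R Z ha

lemma coe_cspanAddSubgroup : (cspanAddSubgroup R Z : Set M) = Cspan R Z := rfl

end CspanLemmas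

theorem irreducibles_spanned_by_irreducible_monomials
    {M : Type*} [AddCommGroup M] [UniformSpace M] [IsUniformAddGroup M]
    [CompleteSpace M] [T2Space M]
    (B : ℕ → AddSubgroup M)
    (hBopen : ∀ n, IsOpen (B n : Set M))
    (hBanti : ∀ n, (B (n + 1) : Set M) ⊆ (B n : Set M))
    (hBbasis : (nhds (0 : M)).HasBasis (fun _ : ℕ => True) (fun n => (B n : Set M)))
    (hBsep : ⋂ n, (B n : Set M) = {0})
    (R : Set (AddMonoid.End M))
    (hRcont : ∀ r ∈ R, Continuous r)
    (hRsmall : ∀ r ∈ R, ∀ n : ℕ, ∀ a ∈ B n, r a ∈ B n)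
    (T1 : Set (AddMonoid.End M))
    (hT1cont : ∀ t ∈ T1, Continuous t)
    (hT1comm : ∀ t ∈ T1, ∀ r ∈ R, ∀ a : M, t (r a) = r (t a))
    (Y : Set M)
    (hYspan : Cspan R Y = (Set.univ : Set M))
    (P : M → M → Prop)
    (hPirr : ∀ μ, ¬ P μ μ)
    (hPtrans : ∀ μ ν ρ, P μ ν → P ν ρ → P μ ρ)
    (hTDCC : TDCC Y P)
    (hcompat : ∀ t ∈ TS T1, Compatible R Y P t)
    (hequi : Equicont T1 B) :
    IrrS T1 = Cspan R {μ | μ ∈ Y ∧ ∀ t ∈ T1, t μ = μ} := by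
  classical
  -- Basic facts about TS
  have hTS_one : (1 : AddMonoid.End M) ∈ TS T1 := Submonoid.one_mem _
  have hTS_mul : ∀ {s t : AddMonoid.End M}, s ∈ TS T1 → t ∈ TS T1 → s * t ∈ TS T1 :=
    fun hs ht => Submonoid.mul_mem _ hs ht
  have hTS_of : ∀ t ∈ T1, t ∈ TS T1 := fun _ ht => Submonoid.subset_closure ht
  have hTScont : ∀ t ∈ TS T1, Continuous t := by
    intro t ht
    induction ht using Submonoid.closure_induction with
    | mem x hx => exact hT1cont x hx
    | one => exact continuous_id
    | mul x y hx hy ihx ihy => exact ihx.comp ihy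
  have hTScomm : ∀ t ∈ TS T1, ∀ r ∈ R, ∀ a : M, t (r a) = r (t a) := by
    intro t ht
    induction ht using Submonoid.closure_induction with
    | mem x hx => exact hT1comm x hx
    | one => intro r hr a; rfl
    | mul x y hx hy ihx ihy =>
      intro r hr a
      show x (y (r a)) = r (x (y a))
      rw [ihy r hr a, ihx r hr (y a)]
  have hTSfix : ∀ μ : M, (∀ t ∈ T1, t μ = μ) → ∀ t ∈ TS T1, t μ = μ := by
    intro μ hμ t ht
    induction ht using Submonoid.closure_induction with
    | mem x hx => exact hμ x hx
    | one => rfl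
    | mul x y hx hy ihx ihy => show x (y μ) = μ; rw [ihy, ihx]
  set F : Set M := {μ | μ ∈ Y ∧ ∀ t ∈ T1, t μ = μ} with hFdef
  -- IrrS is a closed R-stable subgroup
  have hIrr_closed : IsClosed (IrrS T1) := by
    have : IrrS T1 = ⋂ t ∈ TS T1, {a : M | t a = a} := by
      ext a; simp [IrrS, Set.mem_iInter]
    rw [this]
    exact isClosed_biInter fun t ht => isClosed_eq (hTScont t ht) continuous_id
  have hIrr_grp : ∃ H : AddSubgroup M, IrrS T1 = ↑H := by
    refine ⟨{ carrier := IrrS T1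
              zero_mem' := by intro t _; exact map_zero t
              add_mem' := by
                intro a b ha hb t ht
                rw [map_add, ha t ht, hb t ht]
              neg_mem' := by
                intro a ha t ht
                rw [map_neg, ha t ht] }, rfl⟩
  have hIrr_R : ∀ r ∈ R, ∀ a ∈ IrrS T1, r a ∈ IrrS T1 := by
    intro r hr a ha t ht
    rw [hTScomm t ht r hr, ha t ht]
  -- One inclusion
  have hsup : Cspan R F ⊆ IrrS T1 := by
    refine cspan_min R F ?_ hIrr_closed hIrr_grp hIrr_R
    intro μ hμ t ht
    exact hTSfix μ hμ.2 t ht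
  -- The other inclusion
  refine Set.Subset.antisymm ?_ hsup
  intro a ha
  -- `ha : a ∈ IrrS T1` i.e. `∀ t ∈ TS T1, t a = a`
  have hNclosed : IsClosed (Cspan R F) := cspan_isClosed R F
  have key : ∀ n : ℕ, ∃ y ∈ Cspan R F, a - y ∈ (B n : Set M) := by
    intro n
    obtain ⟨m, hm⟩ := hequi n
    -- W = Cspan R F + B n
    set W : Set M := {x | ∃ y ∈ Cspan R F, x - y ∈ (B n : Set M)} with hWdef
    have hW0 : (0 : M) ∈ W := ⟨0, cspan_zero_mem R F, by simpa using (B n).zero_mem⟩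
    have hWadd : ∀ x y : M, x ∈ W → y ∈ W → x + y ∈ W := by
      rintro x y ⟨u, hu, hxu⟩ ⟨v, hv, hyv⟩
      refine ⟨u + v, cspan_add_mem R F hu hv, ?_⟩
      have : x + y - (u + v) = (x - u) + (y - v) := by abel
      rw [this]; exact (B n).add_mem hxu hyv
    have hWneg : ∀ x : M, x ∈ W → -x ∈ W := by
      rintro x ⟨u, hu, hxu⟩
      refine ⟨-u, cspan_neg_mem R F hu, ?_⟩
      have : -x - -u = -(x - u) := by abel
      rw [this]; exact (B n).neg_mem hxu
    have hWN : Cspan R F ⊆ W := fun x hx => ⟨x, hx, by simpa using (B n).zero_mem⟩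
    have hWB : (B n : Set M) ⊆ W := fun x hx => ⟨0, cspan_zero_mem R F, by simpa using hx⟩
    have hWr : ∀ r ∈ R, ∀ x ∈ W, r x ∈ W := by
      rintro r hr x ⟨u, hu, hxu⟩
      refine ⟨r u, cspan_r_mem R F hr hu, ?_⟩
      rw [← map_sub]
      exact hRsmall r hr n _ hxu
    -- the reducibility set
    set Sn : Set M := {x | ∀ t ∈ TS T1, ∃ t' ∈ TS T1, ∀ s ∈ TS T1, s (t' (t x)) ∈ W}
      with hSdef
    have hmemSn : ∀ x : M, x ∈ Sn ↔
        ∀ t ∈ TS T1, ∃ t' ∈ TS T1, ∀ s ∈ TS T1, s (t' (t x)) ∈ W := fun x => Iff.rfl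
    have hSn0 : (0 : M) ∈ Sn := by
      rw [hmemSn]
      intro t ht
      refine ⟨1, hTS_one, fun s hs => ?_⟩
      have : s ((1 : AddMonoid.End M) (t (0 : M))) = 0 := by
        show s (t 0) = 0; rw [map_zero, map_zero]
      rw [this]; exact hW0
    have hSnneg : ∀ x : M, x ∈ Sn → -x ∈ Sn := by
      intro x hx
      rw [hmemSn] at hx ⊢
      intro t ht
      obtain ⟨t', ht', h⟩ := hx t ht
      refine ⟨t', ht', fun s hs => ?_⟩
      have : s (t' (t (-x))) = -(s (t' (t x))) := by rw [map_neg, map_neg, map_neg]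
      rw [this]; exact hWneg _ (h s hs)
    have hSnadd : ∀ x y : M, x ∈ Sn → y ∈ Sn → x + y ∈ Sn := by
      intro x y hx hy
      rw [hmemSn] at hx hy ⊢
      intro t ht
      obtain ⟨t1, ht1, h1⟩ := hx t ht
      obtain ⟨t2, ht2, h2⟩ := hy (t1 * t) (hTS_mul ht1 ht)
      refine ⟨t2 * t1, hTS_mul ht2 ht1, fun s hs => ?_⟩
      have e : s ((t2 * t1) (t (x + y)))
          = (s * t2) (t1 (t x)) + s (t2 ((t1 * t) y)) := by
        show s (t2 (t1 (t (x + y)))) = s (t2 (t1 (t x))) + s (t2 (t1 (t y)))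
        rw [map_add, map_add, map_add, map_add]
      rw [e]
      exact hWadd _ _ (h1 (s * t2) (hTS_mul hs ht2)) (h2 s hs)
    have hSnr : ∀ r ∈ R, ∀ x ∈ Sn, r x ∈ Sn := by
      intro r hr x hx
      rw [hmemSn] at hx
      rw [hmemSn]
      intro t ht
      obtain ⟨t', ht', h⟩ := hx t ht
      refine ⟨t', ht', fun s hs => ?_⟩
      have e : s (t' (t (r x))) = r (s (t' (t x))) := by
        rw [hTScomm t ht r hr, hTScomm t' ht' r hr, hTScomm s hs r hr]
      rw [e]; exact hWr r hr _ (h s hs)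
    have hBmSn : (B m : Set M) ⊆ Sn := by
      intro x hx
      rw [hmemSn]
      intro t ht
      refine ⟨1, hTS_one, fun s hs => ?_⟩
      have : s ((1 : AddMonoid.End M) (t x)) = (s * t) x := rfl
      rw [this]
      exact hWB (hm (s * t) (hTS_mul hs ht) x hx)
    let HSn : AddSubgroup M :=
      { carrier := Sn
        zero_mem' := hSn0
        add_mem' := fun hx hy => hSnadd _ _ hx hy
        neg_mem' := fun hx => hSnneg _ hx }
    have hSnopen : IsOpen Sn :=
      HSn.isOpen_of_mem_nhds
        (Filter.mem_of_superset ((hBopen m).mem_nhds (B m).zero_mem) hBmSn)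
    have hSnclosed : IsClosed Sn := HSn.isClosed_of_isOpen hSnopen
    -- the key step using compatibility
    have step : ∀ μ ∈ Y, μ ∉ Sn → ∃ ν, ν ∈ Y ∧ P ν μ ∧ ν ∉ Sn := by
      intro μ hμY hμ
      by_contra hcon
      push_neg at hcon
      apply hμ
      have hDSM : DSM R Y P μ ⊆ Sn := by
        refine cspan_min R _ ?_ hSnclosed ⟨HSn, rfl⟩ hSnr
        intro ν hν
        exact hcon ν hν.1 hν.2
      rw [hmemSn]
      intro t ht
      rcases hcompat t ht μ hμY with h1 | h2
      · by_cases hF : ∀ t1 ∈ T1, t1 μ = μ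
        · refine ⟨1, hTS_one, fun s hs => ?_⟩
          have : s ((1 : AddMonoid.End M) (t μ)) = μ := by
            show s (t μ) = μ; rw [h1, hTSfix μ hF s hs]
          rw [this]
          exact hWN (subset_cspan R F ⟨hμY, hF⟩)
        · push_neg at hF
          obtain ⟨t1, ht1, hne⟩ := hF
          rcases hcompat t1 (hTS_of t1 ht1) μ hμY with h3 | h3
          · exact absurd h3 hne
          · have hmem := hDSM h3
            rw [hmemSn] at hmem
            obtain ⟨t', ht', hst⟩ := hmem 1 hTS_one
            refine ⟨t' * t1, hTS_mul ht' (hTS_of t1 ht1), fun s hs => ?_⟩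
            have : s ((t' * t1) (t μ)) = s (t' ((1 : AddMonoid.End M) (t1 μ))) := by
              rw [h1]; rfl
            rw [this]
            exact hst s hs
      · have hmem := hDSM h2
        rw [hmemSn] at hmem
        obtain ⟨t', ht', hst⟩ := hmem 1 hTS_one
        exact ⟨t', ht', fun s hs => hst s hs⟩
    -- Y ⊆ Sn, by TDCC
    have hYSn : Y ⊆ Sn := by
      by_contra hns
      rw [Set.not_subset] at hns
      obtain ⟨μ0, hμ0Y, hμ0⟩ := hns
      choose f hf1 hf2 hf3 using step
      let g : ℕ → {x : M // x ∈ Y ∧ x ∉ Sn} := fun k =>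
        Nat.rec ⟨μ0, hμ0Y, hμ0⟩
          (fun _ p => ⟨f p.1 p.2.1 p.2.2, hf1 p.1 p.2.1 p.2.2, hf3 p.1 p.2.1 p.2.2⟩) k
      have hgP : ∀ k, P ((g (k + 1)).1) ((g k).1) := fun k =>
        hf2 (g k).1 (g k).2.1 (g k).2.2
      have htend := hTDCC (fun k => (g k).1) (fun k => (g k).2.1) hgP
      have hSn_nhds : Sn ∈ nhds (0 : M) :=
        Filter.mem_of_superset ((hBopen m).mem_nhds (B m).zero_mem) hBmSn
      have hev : ∀ᶠ k in Filter.atTop, (g k).1 ∈ Sn := htend hSn_nhds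
      obtain ⟨k, hk⟩ := hev.exists
      exact (g k).2.2 hk
    have hall : Cspan R Y ⊆ Sn := cspan_min R Y hYSn hSnclosed ⟨HSn, rfl⟩ hSnr
    have haSn : a ∈ Sn := hall (by rw [hYspan]; exact Set.mem_univ a)
    rw [hmemSn] at haSn
    obtain ⟨t', ht', hst⟩ := haSn 1 hTS_one
    have e : (1 : AddMonoid.End M) (t' ((1 : AddMonoid.End M) a)) = a := by
      show t' a = a
      exact ha t' ht'
    have haW : a ∈ W := e ▸ hst 1 hTS_one
    exact haW
  -- conclude using closedness of Cspan R F
  choose y hyN hyB using key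
  have hanti : Antitone fun n => (B n : Set M) := antitone_nat_of_succ_le hBanti
  have hy_tendsto : Filter.Tendsto y Filter.atTop (nhds a) := by
    rw [← tendsto_sub_nhds_zero_iff]
    rw [hBbasis.tendsto_right_iff]
    intro n _
    filter_upwards [Filter.eventually_ge_atTop n] with k hk
    have : -(a - y k) ∈ (B k : Set M) := (B k).neg_mem (hyB k)
    rw [neg_sub] at this
    exact hanti hk this
  exact hNclosed.mem_of_tendsto hy_tendsto (Filter.Eventually.of_forall hyN)
end

section
/- Assume that for each sort i ∈ I every element of T1(S)(i) is compatible with the partial order P(i), and that every v ∈ V(i,j) correlates P(j) to P(i), for all i,j ∈ I. Then the following are equivalent: (a') for every i ∈ I, every ambiguity of T1(S)(i) is resolvable relative to P(i); (a'') for every i ∈ I, every V-critical ambiguity of T1(S)(i) is resolvable relative to P(i). -/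
open Set Filter Topology

/-- `R*Y`: images of elements of `Y` under finite compositions of elements of `R`. -/
def RstarY {M : Type*} [AddCommGroup M] (R : Set (AddMonoid.End M)) (Y : Set M) : Set M :=
  {b | ∃ r ∈ (Submonoid.closure R : Submonoid (AddMonoid.End M)), ∃ μ ∈ Y, b = r μ}

/-- An ambiguity-shaped triple `(t, μ, u)` in a group `α`. -/
structure Amb (α : Type*) [AddCommGroup α] where
  t : AddMonoid.End α
  mu : α
  u : AddMonoid.End α

/-- `(t,μ,u)` is an ambiguity of `T1`: both reductions are simple and act
nontrivially on the monomial `μ ∈ Y`. -/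
def IsAmb {α : Type*} [AddCommGroup α] (T1 : Set (AddMonoid.End α)) (Y : Set α)
    (A : Amb α) : Prop :=
  A.t ∈ T1 ∧ A.u ∈ T1 ∧ A.mu ∈ Y ∧ A.t A.mu ≠ A.mu ∧ A.u A.mu ≠ A.mu

section Multi

variable {I : Type*} {M : I → Type*} [∀ i, AddCommGroup (M i)]

/-- `A` is a `V`-shadow of `A'`. -/
def IsShadow (V : ∀ i j : I, Set (M j →+ M i)) {i i' : I}
    (A : Amb (M i)) (A' : Amb (M i')) : Prop :=
  ∃ v ∈ V i i', A.mu = v A'.mu ∧ A.t A.mu = v (A'.t A'.mu) ∧ A.u A.mu = v (A'.u A'.mu)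

/-- `A` is a proper `V`-shadow of `A'`. -/
def IsProperShadow (V : ∀ i j : I, Set (M j →+ M i)) {i i' : I}
    (A : Amb (M i)) (A' : Amb (M i')) : Prop :=
  IsShadow V A A' ∧ ¬ IsShadow V A' A

/-- `A` is `V`-shadow-minimal: not a proper `V`-shadow of any ambiguity. -/
def ShadowMinimal (T1 : ∀ i, Set (AddMonoid.End (M i))) (Y : ∀ i, Set (M i))
    (V : ∀ i j : I, Set (M j →+ M i)) {i : I} (A : Amb (M i)) : Prop :=
  ¬ ∃ i' : I, ∃ A' : Amb (M i'), IsAmb (T1 i') (Y i') A' ∧ IsProperShadow V A A'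

/-- `A` is `V`-shadow-critical: not a proper `V`-shadow of any
`V`-shadow-minimal ambiguity. -/
def ShadowCritical (T1 : ∀ i, Set (AddMonoid.End (M i))) (Y : ∀ i, Set (M i))
    (V : ∀ i j : I, Set (M j →+ M i)) {i : I} (A : Amb (M i)) : Prop :=
  ¬ ∃ i' : I, ∃ A' : Amb (M i'), IsAmb (T1 i') (Y i') A' ∧
    ShadowMinimal T1 Y V A' ∧ IsProperShadow V A A'

/-- A bihomomorphism in two group variables. -/
def Bihom {α β γ : Type*} [AddCommGroup α] [AddCommGroup β] [AddCommGroup γ]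
    (w : α → β → γ) : Prop :=
  ∀ a1 b1 : α, ∀ a2 b2 : β,
    w (a1 - b1) (a2 - b2) = w a1 a2 - w b1 a2 - w a1 b2 + w b1 b2

/-- The biadvanceability condition on a bihomomorphism. -/
def Biadv (R T1 : ∀ i, Set (AddMonoid.End (M i))) (Y : ∀ i, Set (M i))
    (i i1 i2 : I) (w : M i1 → M i2 → M i) : Prop :=
  (∀ t1 ∈ T1 i1, ∀ b1 ∈ RstarY (R i1) (Y i1), ∀ b2 ∈ RstarY (R i2) (Y i2),
    ∃ t ∈ TS (T1 i), t (w b1 b2) = w (t1 b1) b2) ∧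
  (∀ t2 ∈ TS (T1 i2), ∀ b1 ∈ RstarY (R i1) (Y i1), ∀ b2 ∈ RstarY (R i2) (Y i2),
    ∃ t ∈ TS (T1 i), t (w b1 b2) = w b1 (t2 b2))

/-- `A` is a `(V(i,i₁),V(i,i₂))`-montage ambiguity. -/
def IsMontage [∀ i, TopologicalSpace (M i)]
    (R T1 : ∀ i, Set (AddMonoid.End (M i))) (Y : ∀ i, Set (M i))
    (V : ∀ i j : I, Set (M j →+ M i)) {i : I} (i1 i2 : I) (A : Amb (M i)) : Prop :=
  ∃ w : M i1 → M i2 → M i,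
    Continuous (fun p : M i1 × M i2 => w p.1 p.2) ∧
    Bihom w ∧
    Biadv R T1 Y i i1 i2 w ∧
    (∀ ρ ∈ Y i2, ∃ v ∈ V i i1, ∀ x : M i1, v x = w x ρ) ∧
    (∀ ρ ∈ Y i1, ∃ v ∈ V i i2, ∀ x : M i2, v x = w ρ x) ∧
    ∃ lam ∈ Y i1, ∃ t' ∈ TS (T1 i1), ∃ nu ∈ Y i2, ∃ u' ∈ TS (T1 i2),
      A.mu = w lam nu ∧ A.t A.mu = w (t' lam) nu ∧ A.u A.mu = w lam (u' nu)

/-- `A` is a `V`-critical ambiguity. -/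
def VCritical [∀ i, TopologicalSpace (M i)]
    (R T1 : ∀ i, Set (AddMonoid.End (M i))) (Y : ∀ i, Set (M i))
    (V : ∀ i j : I, Set (M j →+ M i)) {i : I} (A : Amb (M i)) : Prop :=
  ShadowCritical T1 Y V A ∧ ∀ i1 i2 : I, ¬ IsMontage R T1 Y V i1 i2 A

end Multi


/-! ### Auxiliary lemmas -/

section Aux

variable {M : Type*} [AddCommGroup M] [TopologicalSpace M]

lemma aux_subset_Cspan (R : Set (AddMonoid.End M)) (Z : Set M) : Z ⊆ Cspan R Z :=
  fun z hz => mem_sInter.mpr fun _ hN => hN.1 hz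

lemma aux_Cspan_isClosed (R : Set (AddMonoid.End M)) (Z : Set M) : IsClosed (Cspan R Z) :=
  isClosed_sInter fun _ hN => hN.2.1

def auxCspanGroup (R : Set (AddMonoid.End M)) (Z : Set M) : AddSubgroup M where
  carrier := Cspan R Z
  zero_mem' := mem_sInter.mpr fun N hN => by
    obtain ⟨h1, h2, ⟨H, rfl⟩, h4⟩ := hN; exact H.zero_mem
  add_mem' := fun {a b} ha hb => mem_sInter.mpr fun N hN => by
    obtain ⟨h1, h2, ⟨H, rfl⟩, h4⟩ := hN
    exact H.add_mem (mem_sInter.mp ha _ ⟨h1, h2, ⟨H, rfl⟩, h4⟩)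
      (mem_sInter.mp hb _ ⟨h1, h2, ⟨H, rfl⟩, h4⟩)
  neg_mem' := fun {a} ha => mem_sInter.mpr fun N hN => by
    obtain ⟨h1, h2, ⟨H, rfl⟩, h4⟩ := hN
    exact H.neg_mem (mem_sInter.mp ha _ ⟨h1, h2, ⟨H, rfl⟩, h4⟩)

lemma aux_mem_CspanGroup {R : Set (AddMonoid.End M)} {Z : Set M} {x : M} :
    x ∈ auxCspanGroup R Z ↔ x ∈ Cspan R Z := Iff.rfl

lemma aux_CspanGroup_isClosed (R : Set (AddMonoid.End M)) (Z : Set M) :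
    IsClosed ((auxCspanGroup R Z : AddSubgroup M) : Set M) :=
  aux_Cspan_isClosed R Z

lemma aux_Cspan_min {R : Set (AddMonoid.End M)} {Z N : Set M}
    (h1 : Z ⊆ N) (h2 : IsClosed N) (h3 : ∃ H : AddSubgroup M, N = ↑H)
    (h4 : ∀ r ∈ R, ∀ a ∈ N, r a ∈ N) : Cspan R Z ⊆ N :=
  sInter_subset_of_mem ⟨h1, h2, h3, h4⟩

lemma aux_Cspan_stable {R : Set (AddMonoid.End M)} {Z : Set M} {r : AddMonoid.End M}
    (hr : r ∈ Submonoid.closure R) : ∀ x ∈ Cspan R Z, r x ∈ Cspan R Z := by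
  induction hr using Submonoid.closure_induction with
  | mem r hrm =>
    intro x hx
    exact mem_sInter.mpr fun N hN => hN.2.2.2 r hrm x (mem_sInter.mp hx N hN)
  | one => intro x hx; exact hx
  | mul a b ha hb pa pb => intro x hx; exact pa _ (pb x hx)

lemma aux_Cspan_push {M₂ : Type*} [AddCommGroup M₂] [TopologicalSpace M₂]
    [IsTopologicalAddGroup M]
    {R : Set (AddMonoid.End M)} (hR : ∀ r ∈ R, Continuous r)
    (Z : Set M) (f : M →+ M₂) (hf : Continuous f)
    (N : AddSubgroup M₂) (hN : IsClosed (N : Set M₂))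
    (h : ∀ r ∈ Submonoid.closure R, ∀ z ∈ Z, f (r z) ∈ N) :
    ∀ x ∈ Cspan R Z, f x ∈ N := by
  set T : Set M := {x | ∃ r ∈ Submonoid.closure R, ∃ z ∈ Z, x = r z} with hT
  have hmap : ∀ (g : AddMonoid.End M), (∀ x ∈ T, g x ∈ (AddSubgroup.closure T : AddSubgroup M)) →
      ∀ y ∈ (AddSubgroup.closure T : AddSubgroup M), g y ∈ AddSubgroup.closure T := by
    intro g hg y hy
    induction hy using AddSubgroup.closure_induction with
    | mem x hx => exact hg x hx
    | zero => rw [map_zero]; exact AddSubgroup.zero_mem _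
    | add a b ha hb pa pb => rw [map_add]; exact AddSubgroup.add_mem _ pa pb
    | neg a ha pa => rw [map_neg]; exact AddSubgroup.neg_mem _ pa
  have hsub : Cspan R Z ⊆ closure ((AddSubgroup.closure T : AddSubgroup M) : Set M) := by
    apply aux_Cspan_min
    · intro z hz
      exact subset_closure (AddSubgroup.subset_closure ⟨1, one_mem _, z, hz, rfl⟩)
    · exact isClosed_closure
    · exact ⟨(AddSubgroup.closure T).topologicalClosure, rfl⟩
    · intro r hr a ha
      have h1 : (r : AddMonoid.End M) a ∈ (r : M → M) '' closure ((AddSubgroup.closure T : AddSubgroup M) : Set M) :=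
        ⟨a, ha, rfl⟩
      have h2 := image_closure_subset_closure_image (hR r hr)
        (s := ((AddSubgroup.closure T : AddSubgroup M) : Set M)) h1
      refine closure_mono ?_ h2
      rintro - ⟨y, hy, rfl⟩
      refine hmap r ?_ y hy
      rintro x ⟨r', hr', z, hz, rfl⟩
      exact AddSubgroup.subset_closure ⟨r * r', mul_mem (Submonoid.subset_closure hr) hr', z, hz, rfl⟩
  intro x hx
  have h1 : f x ∈ closure (f '' ((AddSubgroup.closure T : AddSubgroup M) : Set M)) :=
    image_closure_subset_closure_image hf ⟨x, hsub hx, rfl⟩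
  have h2 : f '' ((AddSubgroup.closure T : AddSubgroup M) : Set M) ⊆ (N : Set M₂) := by
    rintro - ⟨y, hy, rfl⟩
    induction hy using AddSubgroup.closure_induction with
    | mem x hx => obtain ⟨r, hr, z, hz, rfl⟩ := hx; exact h r hr z hz
    | zero => rw [map_zero]; exact N.zero_mem
    | add a b ha hb pa pb => rw [map_add]; exact N.add_mem pa pb
    | neg a ha pa => rw [map_neg]; exact N.neg_mem pa
  have := closure_mono h2 h1
  rwa [hN.closure_eq] at this

lemma aux_Cspan_push' {M₂ : Type*} [AddCommGroup M₂] [TopologicalSpace M₂]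
    [IsTopologicalAddGroup M]
    {R : Set (AddMonoid.End M)} (hR : ∀ r ∈ R, Continuous r)
    (Z : Set M) (f : M → M₂) (hadd : ∀ a b, f (a + b) = f a + f b) (hf : Continuous f)
    (N : AddSubgroup M₂) (hN : IsClosed (N : Set M₂))
    (h : ∀ r ∈ Submonoid.closure R, ∀ z ∈ Z, f (r z) ∈ N) :
    ∀ x ∈ Cspan R Z, f x ∈ N :=
  aux_Cspan_push hR Z (AddMonoidHom.mk' f hadd) hf N hN h

end Aux

section Sorted

variable {M : Type*} [AddCommGroup M] [TopologicalSpace M]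
variable {R T1 : Set (AddMonoid.End M)} {Y : Set M} {P : M → M → Prop}

lemma aux_mem_DSM {μ ν : M} (hν : ν ∈ Y) (h : P ν μ) : ν ∈ DSM R Y P μ :=
  aux_subset_Cspan R _ ⟨hν, h⟩

lemma aux_DSM_stable {μ : M} {r : AddMonoid.End M} (hr : r ∈ Submonoid.closure R)
    {x : M} (hx : x ∈ DSM R Y P μ) : r x ∈ DSM R Y P μ :=
  aux_Cspan_stable hr x hx

lemma aux_DIS_stable {μ : M} {r : AddMonoid.End M} (hr : r ∈ Submonoid.closure R)
    {x : M} (hx : x ∈ DIS R Y P T1 μ) : r x ∈ DIS R Y P T1 μ :=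
  aux_Cspan_stable hr x hx

lemma aux_DIS_zero_mem {μ : M} : (0 : M) ∈ DIS R Y P T1 μ :=
  aux_mem_CspanGroup.mp
    ((auxCspanGroup (M := M) R {x | ∃ ν ∈ Y, P ν μ ∧ ∃ t ∈ T1, x = ν - t ν}).zero_mem)

lemma aux_DIS_add_mem {μ x y : M} (hx : x ∈ DIS R Y P T1 μ) (hy : y ∈ DIS R Y P T1 μ) :
    x + y ∈ DIS R Y P T1 μ :=
  aux_mem_CspanGroup.mp
    ((auxCspanGroup (M := M) R {x | ∃ ν ∈ Y, P ν μ ∧ ∃ t ∈ T1, x = ν - t ν}).add_mem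
      (aux_mem_CspanGroup.mpr hx) (aux_mem_CspanGroup.mpr hy))

lemma aux_DIS_sub_mem {μ x y : M} (hx : x ∈ DIS R Y P T1 μ) (hy : y ∈ DIS R Y P T1 μ) :
    x - y ∈ DIS R Y P T1 μ :=
  aux_mem_CspanGroup.mp
    ((auxCspanGroup (M := M) R {x | ∃ ν ∈ Y, P ν μ ∧ ∃ t ∈ T1, x = ν - t ν}).sub_mem
      (aux_mem_CspanGroup.mpr hx) (aux_mem_CspanGroup.mpr hy))

lemma aux_mem_DIS_gen {μ ν : M} {t : AddMonoid.End M} (hν : ν ∈ Y) (h : P ν μ)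
    (ht : t ∈ T1) : ν - t ν ∈ DIS R Y P T1 μ :=
  aux_subset_Cspan R _ ⟨ν, hν, h, t, ht, rfl⟩

lemma aux_DSM_mono (hPt : ∀ a b c : M, P a b → P b c → P a c) {ρ μ : M} (h : P ρ μ) :
    DSM R Y P ρ ⊆ DSM R Y P μ := by
  apply aux_Cspan_min
  · rintro ν ⟨hν, hlt⟩; exact aux_mem_DSM hν (hPt _ _ _ hlt h)
  · exact aux_Cspan_isClosed _ _
  · exact ⟨auxCspanGroup R _, rfl⟩
  · intro r hr a ha; exact aux_DSM_stable (Submonoid.subset_closure hr) ha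

omit [TopologicalSpace M] in
lemma aux_T1_comm (hcomm : ∀ t ∈ T1, ∀ r ∈ R, ∀ a : M, t (r a) = r (t a))
    {t : AddMonoid.End M} (ht : t ∈ T1) {r : AddMonoid.End M}
    (hr : r ∈ Submonoid.closure R) : ∀ a : M, t (r a) = r (t a) := by
  induction hr using Submonoid.closure_induction with
  | mem r hrm => exact hcomm t ht r hrm
  | one => intro a; rfl
  | mul a b ha hb pa pb =>
    intro x
    show t (a (b x)) = a (b (t x))
    rw [pa (b x)]
    exact congrArg a (pb x)

omit [TopologicalSpace M] in
lemma aux_TS_comm (hcomm : ∀ t ∈ T1, ∀ r ∈ R, ∀ a : M, t (r a) = r (t a))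
    {s : AddMonoid.End M} (hs : s ∈ Submonoid.closure T1) {r : AddMonoid.End M}
    (hr : r ∈ Submonoid.closure R) : ∀ a : M, s (r a) = r (s a) := by
  induction hs using Submonoid.closure_induction with
  | mem t htm => exact aux_T1_comm hcomm htm hr
  | one => intro a; rfl
  | mul a b ha hb pa pb =>
    intro x
    show a (b (r x)) = r (a (b x))
    rw [pb x, pa (b x)]

lemma aux_TS_cont (hT1c : ∀ t ∈ T1, Continuous t) {s : AddMonoid.End M}
    (hs : s ∈ Submonoid.closure T1) : Continuous s := by
  induction hs using Submonoid.closure_induction with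
  | mem t htm => exact hT1c t htm
  | one => exact continuous_id
  | mul a b ha hb pa pb => exact pa.comp pb

variable [IsTopologicalAddGroup M]

lemma aux_TS_maps_DSM (hRc : ∀ r ∈ R, Continuous r) (hT1c : ∀ t ∈ T1, Continuous t)
    (hcomm : ∀ t ∈ T1, ∀ r ∈ R, ∀ a : M, t (r a) = r (t a))
    (hcompat : ∀ t ∈ T1, Compatible R Y P t)
    (hPt : ∀ a b c : M, P a b → P b c → P a c)
    {s : AddMonoid.End M} (hs : s ∈ Submonoid.closure T1) :
    ∀ μ : M, ∀ m ∈ DSM R Y P μ, s m ∈ DSM R Y P μ := by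
  induction hs using Submonoid.closure_induction with
  | mem t htm =>
    intro μ m hm
    refine aux_mem_CspanGroup.mp
      (aux_Cspan_push hRc {ν | ν ∈ Y ∧ P ν μ} (t : AddMonoid.End M) (hT1c t htm)
        (auxCspanGroup R {ν | ν ∈ Y ∧ P ν μ}) (aux_CspanGroup_isClosed _ _) ?_ m hm)
    intro r hr z hz
    refine aux_mem_CspanGroup.mpr ?_
    show t (r z) ∈ DSM R Y P μ
    rw [aux_T1_comm hcomm htm hr z]
    rcases hcompat t htm z hz.1 with h | h
    · rw [h]; exact aux_DSM_stable hr (aux_mem_DSM hz.1 hz.2)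
    · exact aux_DSM_stable hr (aux_DSM_mono hPt hz.2 h)
  | one => intro μ m hm; exact hm
  | mul a b ha hb pa pb => intro μ m hm; exact pa μ (b m) (pb μ m hm)

lemma aux_TS_compat (hRc : ∀ r ∈ R, Continuous r) (hT1c : ∀ t ∈ T1, Continuous t)
    (hcomm : ∀ t ∈ T1, ∀ r ∈ R, ∀ a : M, t (r a) = r (t a))
    (hcompat : ∀ t ∈ T1, Compatible R Y P t)
    (hPt : ∀ a b c : M, P a b → P b c → P a c)
    {s : AddMonoid.End M} (hs : s ∈ Submonoid.closure T1) :
    ∀ μ ∈ Y, s μ = μ ∨ s μ ∈ DSM R Y P μ := by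
  induction hs using Submonoid.closure_induction with
  | mem t htm => exact hcompat t htm
  | one => intro μ hμ; exact Or.inl rfl
  | mul a b ha hb pa pb =>
    intro μ hμ
    rcases pb μ hμ with h | h
    · show a (b μ) = μ ∨ a (b μ) ∈ _
      rw [h]; exact pa μ hμ
    · exact Or.inr (aux_TS_maps_DSM hRc hT1c hcomm hcompat hPt ha μ (b μ) h)

lemma aux_sub_TS_mem_DIS (hRc : ∀ r ∈ R, Continuous r) (hT1c : ∀ t ∈ T1, Continuous t)
    (hcomm : ∀ t ∈ T1, ∀ r ∈ R, ∀ a : M, t (r a) = r (t a))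
    (hcompat : ∀ t ∈ T1, Compatible R Y P t)
    (hPt : ∀ a b c : M, P a b → P b c → P a c)
    {s : AddMonoid.End M} (hs : s ∈ Submonoid.closure T1) :
    ∀ μ : M, ∀ m ∈ DSM R Y P μ, m - s m ∈ DIS R Y P T1 μ := by
  induction hs using Submonoid.closure_induction with
  | mem t htm =>
    intro μ m hm
    refine aux_mem_CspanGroup.mp
      (aux_Cspan_push hRc {ν | ν ∈ Y ∧ P ν μ}
        (AddMonoidHom.mk' (fun x : M => x - t x)
          (by intro a b; show (a + b) - t (a + b) = (a - t a) + (b - t b); rw [map_add]; abel))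
        (continuous_id.sub (hT1c t htm))
        (auxCspanGroup R {x | ∃ ν ∈ Y, P ν μ ∧ ∃ t' ∈ T1, x = ν - t' ν})
        (aux_CspanGroup_isClosed _ _) ?_ m hm)
    intro r hr z hz
    refine aux_mem_CspanGroup.mpr ?_
    show r z - t (r z) ∈ DIS R Y P T1 μ
    rw [aux_T1_comm hcomm htm hr z, ← map_sub]
    exact aux_DIS_stable hr (aux_mem_DIS_gen hz.1 hz.2 htm)
  | one =>
    intro μ m hm
    show m - m ∈ _
    rw [sub_self]; exact aux_DIS_zero_mem
  | mul a b ha hb pa pb =>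
    intro μ m hm
    have h1 := pb μ m hm
    have h2 := pa μ (b m) (aux_TS_maps_DSM hRc hT1c hcomm hcompat hPt hb μ m hm)
    have he : m - (a * b) m = (m - b m) + (b m - a (b m)) := by
      show m - a (b m) = _; abel
    rw [he]; exact aux_DIS_add_mem h1 h2

lemma aux_TS_maps_DIS (hRc : ∀ r ∈ R, Continuous r) (hT1c : ∀ t ∈ T1, Continuous t)
    (hcomm : ∀ t ∈ T1, ∀ r ∈ R, ∀ a : M, t (r a) = r (t a))
    (hcompat : ∀ t ∈ T1, Compatible R Y P t)
    (hPt : ∀ a b c : M, P a b → P b c → P a c)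
    {s : AddMonoid.End M} (hs : s ∈ Submonoid.closure T1) {μ : M} :
    ∀ d ∈ DIS R Y P T1 μ, s d ∈ DIS R Y P T1 μ := by
  intro d hd
  refine aux_mem_CspanGroup.mp
    (aux_Cspan_push hRc {x | ∃ ν ∈ Y, P ν μ ∧ ∃ t' ∈ T1, x = ν - t' ν}
      (s : AddMonoid.End M) (aux_TS_cont hT1c hs)
      (auxCspanGroup R {x | ∃ ν ∈ Y, P ν μ ∧ ∃ t' ∈ T1, x = ν - t' ν})
      (aux_CspanGroup_isClosed _ _) ?_ d hd)
  intro r hr z hz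
  obtain ⟨ν, hν, hlt, t0, ht0, rfl⟩ := hz
  refine aux_mem_CspanGroup.mpr ?_
  show s (r (ν - t0 ν)) ∈ DIS R Y P T1 μ
  rw [aux_TS_comm hcomm hs hr _]
  refine aux_DIS_stable hr ?_
  have hd1 : ν - s ν ∈ DIS R Y P T1 μ :=
    aux_sub_TS_mem_DIS hRc hT1c hcomm hcompat hPt hs μ ν (aux_mem_DSM hν hlt)
  have hd2 : ν - t0 ν ∈ DIS R Y P T1 μ := aux_mem_DIS_gen hν hlt ht0
  have hd3 : t0 ν - s (t0 ν) ∈ DIS R Y P T1 μ := by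
    have ht0ν : t0 ν ∈ DSM R Y P μ := by
      rcases hcompat t0 ht0 ν hν with h | h
      · rw [h]; exact aux_mem_DSM hν hlt
      · exact aux_DSM_mono hPt hlt h
    exact aux_sub_TS_mem_DIS hRc hT1c hcomm hcompat hPt hs μ (t0 ν) ht0ν
  have he : s (ν - t0 ν) = (ν - t0 ν) - (ν - s ν) + (t0 ν - s (t0 ν)) := by
    rw [map_sub]; abel
  rw [he]
  exact aux_DIS_add_mem (aux_DIS_sub_mem hd2 hd1) hd3

end Sorted

theorem critical_ambiguities_suffice
    {I : Type*} {M : I → Type*}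
    [∀ i, AddCommGroup (M i)] [∀ i, UniformSpace (M i)] [∀ i, IsUniformAddGroup (M i)]
    [∀ i, CompleteSpace (M i)] [∀ i, T2Space (M i)]
    (B : ∀ i, ℕ → AddSubgroup (M i))
    (hBopen : ∀ i n, IsOpen (B i n : Set (M i)))
    (hBanti : ∀ i n, (B i (n + 1) : Set (M i)) ⊆ (B i n : Set (M i)))
    (hBbasis : ∀ i, (nhds (0 : M i)).HasBasis (fun _ : ℕ => True)
      (fun n => (B i n : Set (M i))))
    (hBsep : ∀ i, ⋂ n, (B i n : Set (M i)) = {0})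
    (R : ∀ i, Set (AddMonoid.End (M i)))
    (hRcont : ∀ i, ∀ r ∈ R i, Continuous r)
    (hRsmall : ∀ i, ∀ r ∈ R i, ∀ n : ℕ, ∀ a ∈ B i n, r a ∈ B i n)
    (T1 : ∀ i, Set (AddMonoid.End (M i)))
    (hT1cont : ∀ i, ∀ t ∈ T1 i, Continuous t)
    (hT1comm : ∀ i, ∀ t ∈ T1 i, ∀ r ∈ R i, ∀ a : M i, t (r a) = r (t a))
    (Y : ∀ i, Set (M i))
    (P : ∀ i, M i → M i → Prop)
    (hPirr : ∀ i, ∀ μ : M i, ¬ P i μ μ)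
    (hPtrans : ∀ i, ∀ μ ν ρ : M i, P i μ ν → P i ν ρ → P i μ ρ)
    (hcompat : ∀ i, ∀ t ∈ T1 i, Compatible (R i) (Y i) (P i) t)
    (V : ∀ i j : I, Set (M j →+ M i))
    (hVcont : ∀ i j, ∀ v ∈ V i j, Continuous v)
    (hVadv : ∀ i j, ∀ v ∈ V i j, ∀ t' ∈ T1 j, ∀ b ∈ RstarY (R j) (Y j),
      ∃ t ∈ TS (T1 i), t (v b) = v (t' b))
    (hVcorr : ∀ i j, ∀ v ∈ V i j, ∀ μ ∈ Y j, v μ ∈ Y i →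
      ∀ x ∈ DSM (R j) (Y j) (P j) μ, v x ∈ DSM (R i) (Y i) (P i) (v μ)) :
    (∀ i, ∀ A : Amb (M i), IsAmb (T1 i) (Y i) A →
      A.t A.mu - A.u A.mu ∈ DIS (R i) (Y i) (P i) (T1 i) A.mu) ↔
    (∀ i, ∀ A : Amb (M i), IsAmb (T1 i) (Y i) A → VCritical R T1 Y V A →
      A.t A.mu - A.u A.mu ∈ DIS (R i) (Y i) (P i) (T1 i) A.mu) := by
  constructor
  · intro hall i A hA _
    exact hall i A hA
  · intro h
    -- Every montage ambiguity is resolvable.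
    have resolve_montage : ∀ (i i1 i2 : I) (A : Amb (M i)), IsAmb (T1 i) (Y i) A →
        IsMontage R T1 Y V i1 i2 A →
        A.t A.mu - A.u A.mu ∈ DIS (R i) (Y i) (P i) (T1 i) A.mu := by
      rintro i i1 i2 A ⟨htT1, huT1, hμY, htne, hune⟩
        ⟨w, hwc, hwbi, hBadv, hV1, hV2, lam, hlam, t', ht', nu, hnu, u', hu', hmu, htmu, humu⟩
      have hB1 := hBadv.1
      have hB2 := hBadv.2
      -- bihomomorphism slot identities
      have hz2 : ∀ a b : M i1, w (a - b) 0 = 0 := by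
        intro a b
        have hh := hwbi a b 0 0
        rw [sub_self] at hh
        rw [hh]; abel
      have hz1 : ∀ a : M i1, w a 0 = 0 := by
        intro a; have := hz2 a 0; rwa [sub_zero] at this
      have hz2' : ∀ a b : M i2, w 0 (a - b) = 0 := by
        intro a b
        have hh := hwbi 0 0 a b
        rw [sub_self] at hh
        rw [hh]; abel
      have hz1' : ∀ c : M i2, w 0 c = 0 := by
        intro c; have := hz2' c 0; rwa [sub_zero] at this
      have hwsub1 : ∀ (a b : M i1) (c : M i2), w (a - b) c = w a c - w b c := by
        intro a b c
        have hh := hwbi a b c 0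
        rw [sub_zero] at hh
        rw [hh, hz1 a, hz1 b]; abel
      have hwsub2 : ∀ (a : M i1) (b c : M i2), w a (b - c) = w a b - w a c := by
        intro a b c
        have hh := hwbi a 0 b c
        rw [sub_zero] at hh
        rw [hh, hz1' b, hz1' c]; abel
      have hwadd1 : ∀ (a b : M i1) (c : M i2), w (a + b) c = w a c + w b c := by
        intro a b c
        have hn : w (-b) c = - w b c := by
          have h2 := hwsub1 0 b c
          rw [zero_sub, hz1' c] at h2
          rw [h2]; abel
        have hh := hwsub1 a (-b) c
        rw [sub_neg_eq_add] at hh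
        rw [hh, hn]; abel
      have hwadd2 : ∀ (a : M i1) (b c : M i2), w a (b + c) = w a b + w a c := by
        intro a b c
        have hn : w a (-c) = - w a c := by
          have h2 := hwsub2 a 0 c
          rw [zero_sub, hz1 a] at h2
          rw [h2]; abel
        have hh := hwsub2 a b (-c)
        rw [sub_neg_eq_add] at hh
        rw [hh, hn]; abel
      -- continuity of the slot maps
      have hwc1 : ∀ c : M i2, Continuous fun x : M i1 => w x c := by
        intro c
        exact hwc.comp (continuous_id.prodMk continuous_const)
      have hwc2 : ∀ a : M i1, Continuous fun y : M i2 => w a y := by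
        intro a
        exact hwc.comp (continuous_const.prodMk continuous_id)
      obtain ⟨v1, hv1V, hv1e⟩ := hV1 nu hnu
      obtain ⟨v2, hv2V, hv2e⟩ := hV2 lam hlam
      have ht'ne : t' lam ≠ lam := by
        intro he
        exact htne (by rw [htmu, he, ← hmu])
      have hu'ne : u' nu ≠ nu := by
        intro he
        exact hune (by rw [humu, he, ← hmu])
      have ht'DSM : t' lam ∈ DSM (R i1) (Y i1) (P i1) lam := by
        rcases aux_TS_compat (hRcont i1) (hT1cont i1) (hT1comm i1) (hcompat i1)
          (hPtrans i1) ht' lam hlam with hc | hc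
        · exact absurd hc ht'ne
        · exact hc
      have hu'DSM : u' nu ∈ DSM (R i2) (Y i2) (P i2) nu := by
        rcases aux_TS_compat (hRcont i2) (hT1cont i2) (hT1comm i2) (hcompat i2)
          (hPtrans i2) hu' nu hnu with hc | hc
        · exact absurd hc hu'ne
        · exact hc
      have hlamR : lam ∈ RstarY (R i1) (Y i1) := ⟨1, one_mem _, lam, hlam, rfl⟩
      have hnuR : nu ∈ RstarY (R i2) (Y i2) := ⟨1, one_mem _, nu, hnu, rfl⟩
      obtain ⟨s2, hs2TS, hs2e⟩ := hB2 u' hu' lam hlamR nu hnuR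
      have hmuY1 : v1 lam ∈ Y i := by rw [hv1e, ← hmu]; exact hμY
      have hcor1 : ∀ x ∈ DSM (R i1) (Y i1) (P i1) lam,
          w x nu ∈ DSM (R i) (Y i) (P i) A.mu := by
        intro x hx
        have hc := hVcorr i i1 v1 hv1V lam hlam hmuY1 x hx
        rwa [hv1e, hv1e, ← hmu] at hc
      have hmuY2 : v2 nu ∈ Y i := by rw [hv2e, ← hmu]; exact hμY
      have hcor2 : ∀ y ∈ DSM (R i2) (Y i2) (P i2) nu,
          w lam y ∈ DSM (R i) (Y i) (P i) A.mu := by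
        intro y hy
        have hc := hVcorr i i2 v2 hv2V nu hnu hmuY2 y hy
        rwa [hv2e, hv2e, ← hmu] at hc
      have hL6 : ∀ s ∈ Submonoid.closure (T1 i), ∀ m ∈ DSM (R i) (Y i) (P i) A.mu,
          m - s m ∈ DIS (R i) (Y i) (P i) (T1 i) A.mu := by
        intro s hs m hm
        exact aux_sub_TS_mem_DIS (hRcont i) (hT1cont i) (hT1comm i) (hcompat i)
          (hPtrans i) hs A.mu m hm
      -- Step S1
      have hS1 : ∀ s ∈ T1 i1, ∀ y ∈ DSM (R i2) (Y i2) (P i2) nu,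
          w lam y - w (s lam) y ∈ DIS (R i) (Y i) (P i) (T1 i) A.mu := by
        intro s hsm y hy
        have key : w lam y - w (s lam) y ∈
            auxCspanGroup (R i) {x | ∃ ν ∈ Y i, P i ν A.mu ∧ ∃ t ∈ T1 i, x = ν - t ν} := by
          refine aux_Cspan_push' (hRcont i2) {ν | ν ∈ Y i2 ∧ P i2 ν nu}
            (fun y : M i2 => w lam y - w (s lam) y) ?_ ?_ _
            (aux_CspanGroup_isClosed _ _) ?_ y hy
          · intro a b
            show w lam (a + b) - w (s lam) (a + b) = _
            rw [hwadd2, hwadd2]; abel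
          · exact (hwc2 lam).sub (hwc2 (s lam))
          · intro r hr z hz
            refine aux_mem_CspanGroup.mpr ?_
            show w lam (r z) - w (s lam) (r z) ∈ DIS (R i) (Y i) (P i) (T1 i) A.mu
            obtain ⟨p, hp, hpe⟩ := hB1 s hsm lam hlamR (r z) ⟨r, hr, z, hz.1, rfl⟩
            rw [← hpe]
            exact hL6 p hp _ (hcor2 _ (aux_DSM_stable hr (aux_mem_DSM hz.1 hz.2)))
        exact aux_mem_CspanGroup.mp key
      -- Step S3
      have hS3 : ∀ x ∈ DSM (R i1) (Y i1) (P i1) lam,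
          s2 (w x nu) - w x (u' nu) ∈ DIS (R i) (Y i) (P i) (T1 i) A.mu := by
        intro x hx
        have key : s2 (w x nu) - w x (u' nu) ∈
            auxCspanGroup (R i) {x | ∃ ν ∈ Y i, P i ν A.mu ∧ ∃ t ∈ T1 i, x = ν - t ν} := by
          refine aux_Cspan_push' (hRcont i1) {ν | ν ∈ Y i1 ∧ P i1 ν lam}
            (fun x : M i1 => s2 (w x nu) - w x (u' nu)) ?_ ?_ _
            (aux_CspanGroup_isClosed _ _) ?_ x hx
          · intro a b
            show s2 (w (a + b) nu) - w (a + b) (u' nu) = _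
            rw [hwadd1, hwadd1, map_add]; abel
          · exact ((aux_TS_cont (hT1cont i) hs2TS).comp (hwc1 nu)).sub (hwc1 (u' nu))
          · intro r hr z hz
            refine aux_mem_CspanGroup.mpr ?_
            show s2 (w (r z) nu) - w (r z) (u' nu) ∈ DIS (R i) (Y i) (P i) (T1 i) A.mu
            obtain ⟨q, hq, hqe⟩ := hB2 u' hu' (r z) ⟨r, hr, z, hz.1, rfl⟩ nu hnuR
            rw [← hqe]
            have hmN : w (r z) nu ∈ DSM (R i) (Y i) (P i) A.mu :=
              hcor1 _ (aux_DSM_stable hr (aux_mem_DSM hz.1 hz.2))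
            have hsplit : s2 (w (r z) nu) - q (w (r z) nu)
                = (w (r z) nu - q (w (r z) nu)) - (w (r z) nu - s2 (w (r z) nu)) := by abel
            rw [hsplit]
            exact aux_DIS_sub_mem (hL6 q hq _ hmN) (hL6 s2 hs2TS _ hmN)
        exact aux_mem_CspanGroup.mp key
      -- Step M1
      have hM1 : ∀ a ∈ Submonoid.closure (T1 i1), ∀ z ∈ DSM (R i1) (Y i1) (P i1) lam,
          w z nu - w (a z) nu ∈ DIS (R i) (Y i) (P i) (T1 i) A.mu := by
        intro a ha
        induction ha using Submonoid.closure_induction with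
        | mem t1 ht1 =>
          intro z hz
          have key : w z nu - w (t1 z) nu ∈
              auxCspanGroup (R i) {x | ∃ ν ∈ Y i, P i ν A.mu ∧ ∃ t ∈ T1 i, x = ν - t ν} := by
            refine aux_Cspan_push' (hRcont i1) {ν | ν ∈ Y i1 ∧ P i1 ν lam}
              (fun z : M i1 => w z nu - w (t1 z) nu) ?_ ?_ _
              (aux_CspanGroup_isClosed _ _) ?_ z hz
            · intro a b
              show w (a + b) nu - w (t1 (a + b)) nu = _
              rw [map_add, hwadd1, hwadd1]; abel
            · exact (hwc1 nu).sub ((hwc1 nu).comp (hT1cont i1 t1 ht1))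
            · intro r hr z hz
              refine aux_mem_CspanGroup.mpr ?_
              show w (r z) nu - w (t1 (r z)) nu ∈ DIS (R i) (Y i) (P i) (T1 i) A.mu
              obtain ⟨p, hp, hpe⟩ := hB1 t1 ht1 (r z) ⟨r, hr, z, hz.1, rfl⟩ nu hnuR
              rw [← hpe]
              exact hL6 p hp _ (hcor1 _ (aux_DSM_stable hr (aux_mem_DSM hz.1 hz.2)))
          exact aux_mem_CspanGroup.mp key
        | one =>
          intro z hz
          show w z nu - w z nu ∈ DIS (R i) (Y i) (P i) (T1 i) A.mu
          rw [sub_self]; exact aux_DIS_zero_mem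
        | mul a1 a2 h1 h2 p1 p2 =>
          intro z hz
          have hsplit : w z nu - w ((a1 * a2) z) nu
              = (w z nu - w (a2 z) nu) + (w (a2 z) nu - w (a1 (a2 z)) nu) := by
            show w z nu - w (a1 (a2 z)) nu = _
            abel
          rw [hsplit]
          exact aux_DIS_add_mem (p2 z hz)
            (p1 (a2 z) (aux_TS_maps_DSM (hRcont i1) (hT1cont i1) (hT1comm i1)
              (hcompat i1) (hPtrans i1) h2 lam z hz))
      -- Step K
      have hK : ∀ t'' ∈ Submonoid.closure (T1 i1),
          s2 (w lam nu - w (t'' lam) nu) ∈ DIS (R i) (Y i) (P i) (T1 i) A.mu := by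
        intro t'' ht''
        induction ht'' using Submonoid.closure_induction with
        | mem s hsm =>
          by_cases hsl : s lam = lam
          · rw [hsl, sub_self, map_zero]; exact aux_DIS_zero_mem
          · have hslD : s lam ∈ DSM (R i1) (Y i1) (P i1) lam := by
              rcases hcompat i1 s hsm lam hlam with hc | hc
              · exact absurd hc hsl
              · exact hc
            have e1 := hS1 s hsm (u' nu) hu'DSM
            have e2 := hS3 (s lam) hslD
            have hsplit : s2 (w lam nu - w (s lam) nu)
                = (w lam (u' nu) - w (s lam) (u' nu))
                  - (s2 (w (s lam) nu) - w (s lam) (u' nu)) := by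
              rw [map_sub, hs2e]; abel
            rw [hsplit]
            exact aux_DIS_sub_mem e1 e2
        | one =>
          have he : w ((1 : AddMonoid.End (M i1)) lam) nu = w lam nu := rfl
          rw [he, sub_self, map_zero]; exact aux_DIS_zero_mem
        | mul a1 a2 h1 h2 p1 p2 =>
          by_cases h2l : a2 lam = lam
          · have he : (a1 * a2) lam = a1 lam := by show a1 (a2 lam) = _; rw [h2l]
            rw [he]; exact p1
          · have h2D : a2 lam ∈ DSM (R i1) (Y i1) (P i1) lam := by
              rcases aux_TS_compat (hRcont i1) (hT1cont i1) (hT1comm i1) (hcompat i1)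
                (hPtrans i1) h2 lam hlam with hc | hc
              · exact absurd hc h2l
              · exact hc
            have hm1 := hM1 a1 h1 (a2 lam) h2D
            have e1 := aux_TS_maps_DIS (hRcont i) (hT1cont i) (hT1comm i) (hcompat i)
              (hPtrans i) hs2TS _ hm1
            have hsplit : w lam nu - w ((a1 * a2) lam) nu
                = (w lam nu - w (a2 lam) nu) + (w (a2 lam) nu - w (a1 (a2 lam)) nu) := by
              show w lam nu - w (a1 (a2 lam)) nu = _
              abel
            rw [hsplit, map_add]
            exact aux_DIS_add_mem p2 e1
      -- final assembly
      have hfin1 : w (t' lam) nu - s2 (w (t' lam) nu) ∈ DIS (R i) (Y i) (P i) (T1 i) A.mu :=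
        hL6 s2 hs2TS _ (hcor1 _ ht'DSM)
      have hfin2 := hK t' ht'
      have hsplit : A.t A.mu - A.u A.mu
          = (w (t' lam) nu - s2 (w (t' lam) nu)) - s2 (w lam nu - w (t' lam) nu) := by
        rw [htmu, humu, ← hs2e, map_sub]; abel
      rw [hsplit]
      exact aux_DIS_sub_mem hfin1 hfin2
    -- Resolvability transfers along shadows.
    have transfer : ∀ (i i' : I) (A : Amb (M i)) (A' : Amb (M i')),
        A.mu ∈ Y i → A'.mu ∈ Y i' → IsShadow V A A' →
        A'.t A'.mu - A'.u A'.mu ∈ DIS (R i') (Y i') (P i') (T1 i') A'.mu →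
        A.t A.mu - A.u A.mu ∈ DIS (R i) (Y i) (P i) (T1 i) A.mu := by
      rintro i i' A A' hAY hA'Y ⟨v, hvV, hm, ht, hu⟩ hres
      have hvy : v A'.mu ∈ Y i := by rw [← hm]; exact hAY
      rw [ht, hu, ← map_sub, hm]
      have key : v (A'.t A'.mu - A'.u A'.mu) ∈
          auxCspanGroup (R i) {x | ∃ ν ∈ Y i, P i ν (v A'.mu) ∧ ∃ t ∈ T1 i, x = ν - t ν} := by
        refine aux_Cspan_push (hRcont i')
          {x | ∃ ν ∈ Y i', P i' ν A'.mu ∧ ∃ t ∈ T1 i', x = ν - t ν}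
          v (hVcont i i' v hvV) _ (aux_CspanGroup_isClosed _ _) ?_ _ hres
        intro r hr z hz
        obtain ⟨ν, hν, hlt, t0, ht0, rfl⟩ := hz
        refine aux_mem_CspanGroup.mpr ?_
        show v (r (ν - t0 ν)) ∈ DIS (R i) (Y i) (P i) (T1 i) (v A'.mu)
        have hcm : r (ν - t0 ν) = r ν - t0 (r ν) := by
          rw [map_sub, ← aux_T1_comm (hT1comm i') ht0 hr ν]
        obtain ⟨s, hsTS, hse⟩ := hVadv i i' v hvV t0 ht0 (r ν) ⟨r, hr, ν, hν, rfl⟩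
        rw [hcm, map_sub, ← hse]
        have hvb : v (r ν) ∈ DSM (R i) (Y i) (P i) (v A'.mu) :=
          hVcorr i i' v hvV A'.mu hA'Y hvy _ (aux_DSM_stable hr (aux_mem_DSM hν hlt))
        exact aux_sub_TS_mem_DIS (hRcont i) (hT1cont i) (hT1comm i) (hcompat i)
          (hPtrans i) hsTS _ _ hvb
      exact aux_mem_CspanGroup.mp key
    -- main case analysis
    intro i A hA
    by_cases hcrit : VCritical R T1 Y V A
    · exact h i A hA hcrit
    · have hcrit' : ¬ (ShadowCritical T1 Y V A ∧
          ∀ i1 i2 : I, ¬ IsMontage R T1 Y V i1 i2 A) := hcrit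
      rcases not_and_or.mp hcrit' with hsc | hmont
      · obtain ⟨i', A', hA', hmin, hprop⟩ := not_not.mp hsc
        have hres' : A'.t A'.mu - A'.u A'.mu ∈ DIS (R i') (Y i') (P i') (T1 i') A'.mu := by
          by_cases hm' : ∃ i1 i2, IsMontage R T1 Y V i1 i2 A'
          · obtain ⟨i1, i2, hm⟩ := hm'
            exact resolve_montage i' i1 i2 A' hA' hm
          · refine h i' A' hA' ⟨?_, ?_⟩
            · rintro ⟨i'', A'', h1, h2, h3⟩
              exact hmin ⟨i'', A'', h1, h3⟩
            · intro i1 i2 hm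
              exact hm' ⟨i1, i2, hm⟩
        exact transfer i i' A A' hA.2.2.1 hA'.2.2.1 hprop.1 hres'
      · push_neg at hmont
        obtain ⟨i1, i2, hm⟩ := hmont
        exact resolve_montage i i1 i2 A hA hm
end

section
/- Buchberger's theorem as a corollary: Let 𝓡 be a field, X a set, M = 𝓡[X] the commutative polynomial ring, and Y the set of monomials. Let V = {b ↦ μ·b : μ ∈ Y}, and let P be a well-founded total order on Y such that ν < μ in P implies λν < λμ in P for all λ,μ,ν ∈ Y. For rules s₁ = (μ₁,a₁) and s₂ = (μ₂,a₂) define Z(s₁,s₂) = (lcm(μ₁,μ₂)/μ₁)·a₁ − (lcm(μ₁,μ₂)/μ₂)·a₂. Let S ⊆ Y × M be such that a ∈ DSM(μ,P) for every (μ,a) ∈ S, with T1(S) the associated set of simple reductions. Then the following are equivalent: (1) {μ − a : (μ,a) ∈ S} is a P-monic V-Gröbner basis of I(S); (2) for every pair (s₁,s₂) ∈ S × S there exists t ∈ T(S) with t(Z(s₁,s₂)) = 0; (3) for every s₁ = (μ₁,a₁) ∈ S and s₂ = (μ₂,a₂) ∈ S such that the monomials μ₁ and μ₂ are not coprime, there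 exists t ∈ T(S) with t(Z(s₁,s₂)) = 0. -/
open Set MvPolynomial

/-- All finite compositions of elements of `T1`, including the identity. -/
def Tclos {α : Type*} (T1 : Set (Function.End α)) : Set (Function.End α) :=
  ↑(Submonoid.closure T1)

/-- The simple reductions associated to a rule set `S` in a commutative
polynomial ring: `t_{λ,(μ,a)}(b) = b − f_{λμ}(b) • (λμ − λ·a)`. -/
def T1B {K X : Type*} [Field K] (S : Set ((X →₀ ℕ) × MvPolynomial X K)) :
    Set (Function.End (MvPolynomial X K)) :=
  {t | ∃ lam : X →₀ ℕ, ∃ p ∈ S,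
    t = fun b => b - MvPolynomial.coeff (lam + p.1) b •
      (MvPolynomial.monomial (lam + p.1) (1 : K) -
        MvPolynomial.monomial lam (1 : K) * p.2)}

/-- The ideal `I(S)`: the additive subgroup generated by `{b − t(b)}`. -/
def ISB {K X : Type*} [Field K] (T1 : Set (Function.End (MvPolynomial X K))) :
    Set (MvPolynomial X K) :=
  (AddSubgroup.closure
    {x : MvPolynomial X K | ∃ b : MvPolynomial X K, ∃ t ∈ Tclos T1, x = b - t b} :
      Set (MvPolynomial X K))

/-- The down-set module: span of the monomials strictly below `m`. -/
def DSMb {K X : Type*} [Field K] (P : (X →₀ ℕ) → (X →₀ ℕ) → Prop) (m : X →₀ ℕ) :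
    Set (MvPolynomial X K) :=
  (Submodule.span K {q : MvPolynomial X K |
    ∃ ν : X →₀ ℕ, P ν m ∧ q = MvPolynomial.monomial ν (1 : K)} : Set (MvPolynomial X K))

def suppB {K X : Type*} [Field K] (a : MvPolynomial X K) : Set (X →₀ ℕ) :=
  {m | MvPolynomial.coeff m a ≠ 0}

/-- The set of `P`-leading monomials of `a`. -/
def LMb {K X : Type*} [Field K] (P : (X →₀ ℕ) → (X →₀ ℕ) → Prop)
    (a : MvPolynomial X K) : Set (X →₀ ℕ) :=
  {m | m ∈ suppB a ∧ ∀ k ∈ suppB a, ¬ P m k}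

def PMonicB {K X : Type*} [Field K] (P : (X →₀ ℕ) → (X →₀ ℕ) → Prop)
    (g : MvPolynomial X K) : Prop :=
  ∃ m : X →₀ ℕ, g - MvPolynomial.monomial m (1 : K) ∈ DSMb P m

/-- `G` is a `P`-monic `V`-Gröbner basis of `N`, for `V` the monoid of
multiplications by monomials. -/
def IsGrobnerB {K X : Type*} [Field K] (P : (X →₀ ℕ) → (X →₀ ℕ) → Prop)
    (G : Set (MvPolynomial X K)) (N : Set (MvPolynomial X K)) : Prop :=
  (∀ g ∈ G, PMonicB P g) ∧
  (∀ m : X →₀ ℕ, ∀ g ∈ G, MvPolynomial.monomial m (1 : K) * g ∈ N) ∧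
  (∀ a ∈ N, ∀ m ∈ LMb P a, ∃ g ∈ G, ∃ lam : X →₀ ℕ, ∃ k : X →₀ ℕ,
    LMb P g = {k} ∧
    MvPolynomial.monomial m (1 : K) =
      MvPolynomial.monomial lam (1 : K) * MvPolynomial.monomial k (1 : K))

/-- The S-polynomial `Z(s₁,s₂)` of two rules. -/
noncomputable def Zpol {K X : Type*} [Field K]
    (s1 s2 : (X →₀ ℕ) × MvPolynomial X K) : MvPolynomial X K :=
  MvPolynomial.monomial (s1.1 ⊔ s2.1 - s1.1) (1 : K) * s1.2 -
    MvPolynomial.monomial (s1.1 ⊔ s2.1 - s2.1) (1 : K) * s2.2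

section Aux

attribute [local instance] Classical.propDecidable

variable {K X : Type*} [Field K]
variable {P : (X →₀ ℕ) → (X →₀ ℕ) → Prop}
variable {S : Set ((X →₀ ℕ) × MvPolynomial X K)}

/-- The polynomial `μ - a` associated to a rule. -/
noncomputable def Gof (s : (X →₀ ℕ) × MvPolynomial X K) : MvPolynomial X K :=
  MvPolynomial.monomial s.1 (1 : K) - s.2

lemma exists_max (hPirr : ∀ m, ¬ P m m) (hPtrans : ∀ m k l, P m k → P k l → P m l)
    (hPtotal : ∀ m k : X →₀ ℕ, m ≠ k → P m k ∨ P k m) :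
    ∀ t : Finset (X →₀ ℕ), t.Nonempty → ∃ m ∈ t, ∀ k ∈ t, ¬ P m k := by
  intro t
  induction t using Finset.induction_on with
  | empty => simp
  | @insert a t ha IH =>
    intro _
    rcases t.eq_empty_or_nonempty with rfl | hne
    · exact ⟨a, by simp, by simp [hPirr]⟩
    obtain ⟨m, hm, hmax⟩ := IH hne
    by_cases hPam : P a m
    · refine ⟨m, Finset.mem_insert_of_mem hm, ?_⟩
      intro k hk
      rcases Finset.mem_insert.1 hk with rfl | hk
      · intro hma; exact hPirr m (hPtrans _ _ _ hma hPam)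
      · exact hmax k hk
    · refine ⟨a, Finset.mem_insert_self a t, ?_⟩
      intro k hk
      rcases Finset.mem_insert.1 hk with rfl | hk
      · exact hPirr k
      · intro hak
        rcases eq_or_ne k m with rfl | hkm
        · exact hPam hak
        · rcases hPtotal k m hkm with h | h
          · exact hPam (hPtrans _ _ _ hak h)
          · exact hmax k hk h

lemma dsm_coeff {a : MvPolynomial X K} {m k : X →₀ ℕ} (ha : a ∈ DSMb P m)
    (hk : MvPolynomial.coeff k a ≠ 0) : P k m := by
  rw [DSMb, SetLike.mem_coe] at ha
  induction ha using Submodule.span_induction with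
  | mem x hx =>
    obtain ⟨ν, hν, rfl⟩ := hx
    rw [MvPolynomial.coeff_monomial] at hk
    rcases eq_or_ne ν k with rfl | hne
    · exact hν
    · simp [hne] at hk
  | zero => simp at hk
  | add x y hx hy ihx ihy =>
    rw [MvPolynomial.coeff_add] at hk
    by_cases h : MvPolynomial.coeff k x = 0
    · exact ihy (by simpa [h] using hk)
    · exact ihx h
  | smul c x hx ih =>
    rw [MvPolynomial.coeff_smul, smul_eq_mul] at hk
    exact ih (right_ne_zero_of_mul hk)

end Aux
section Aux2

attribute [local instance] Classical.propDecidable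

open MvPolynomial

variable {K X : Type*} [Field K]
variable {P : (X →₀ ℕ) → (X →₀ ℕ) → Prop}
variable {S : Set ((X →₀ ℕ) × MvPolynomial X K)}

lemma coeff_monomial_mul_ne {b : MvPolynomial X K} {ν k : X →₀ ℕ}
    (h : MvPolynomial.coeff k (MvPolynomial.monomial ν (1:K) * b) ≠ 0) :
    ∃ ρ, k = ν + ρ ∧ MvPolynomial.coeff ρ b ≠ 0 := by
  rw [MvPolynomial.coeff_monomial_mul'] at h
  by_cases hle : ν ≤ k
  · exact ⟨k - ν, (add_tsub_cancel_of_le hle).symm, by simpa [hle] using h⟩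
  · simp [hle] at h

lemma coeff_Gof_ne {s : (X →₀ ℕ) × MvPolynomial X K}
    (hs2 : ∀ k, MvPolynomial.coeff k s.2 ≠ 0 → P k s.1) {k : X →₀ ℕ}
    (h : MvPolynomial.coeff k (Gof s) ≠ 0) : k = s.1 ∨ P k s.1 := by
  rw [Gof, MvPolynomial.coeff_sub, MvPolynomial.coeff_monomial] at h
  rcases eq_or_ne k s.1 with rfl | hne
  · exact Or.inl rfl
  · refine Or.inr (hs2 k ?_)
    intro h0
    simp [Ne.symm hne, h0] at h

lemma coeff_Gof_self (hPirr : ∀ m, ¬ P m m) {s : (X →₀ ℕ) × MvPolynomial X K}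
    (hs2 : ∀ k, MvPolynomial.coeff k s.2 ≠ 0 → P k s.1) :
    MvPolynomial.coeff s.1 (Gof s) = 1 := by
  rw [Gof, MvPolynomial.coeff_sub, MvPolynomial.coeff_monomial]
  have : MvPolynomial.coeff s.1 s.2 = 0 := by
    by_contra h; exact hPirr s.1 (hs2 _ h)
  simp [this]

lemma coeff_term_ne (hPmul : ∀ lam m k : X →₀ ℕ, P m k → P (lam + m) (lam + k))
    {s : (X →₀ ℕ) × MvPolynomial X K}
    (hs2 : ∀ k, MvPolynomial.coeff k s.2 ≠ 0 → P k s.1) {ν k : X →₀ ℕ}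
    (h : MvPolynomial.coeff k (MvPolynomial.monomial ν (1:K) * Gof s) ≠ 0) :
    k = ν + s.1 ∨ P k (ν + s.1) := by
  obtain ⟨ρ, rfl, hρ⟩ := coeff_monomial_mul_ne h
  rcases coeff_Gof_ne hs2 hρ with rfl | hρ'
  · exact Or.inl rfl
  · exact Or.inr (hPmul ν _ _ hρ')

lemma coeff_term_self (hPirr : ∀ m, ¬ P m m) {s : (X →₀ ℕ) × MvPolynomial X K}
    (hs2 : ∀ k, MvPolynomial.coeff k s.2 ≠ 0 → P k s.1) (ν : X →₀ ℕ) :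
    MvPolynomial.coeff (ν + s.1) (MvPolynomial.monomial ν (1:K) * Gof s) = 1 := by
  rw [MvPolynomial.coeff_monomial_mul, coeff_Gof_self hPirr hs2, one_mul]

/-- Span of the `monomial ν * (μ - a)` with a constraint on `(ν, s)`. -/
noncomputable def SpanT (S : Set ((X →₀ ℕ) × MvPolynomial X K))
    (C : (X →₀ ℕ) → ((X →₀ ℕ) × MvPolynomial X K) → Prop) :
    Submodule K (MvPolynomial X K) :=
  Submodule.span K {x | ∃ s ∈ S, ∃ ν, C ν s ∧ x = MvPolynomial.monomial ν (1:K) * Gof s}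

lemma T1B_eq {t : Function.End (MvPolynomial X K)} (ht : t ∈ T1B S) :
    ∃ lam, ∃ p ∈ S, ∀ b, t b = b - MvPolynomial.coeff (lam + p.1) b •
      (MvPolynomial.monomial lam (1:K) * Gof p) := by
  obtain ⟨lam, p, hp, rfl⟩ := ht
  refine ⟨lam, p, hp, fun b => ?_⟩
  have : MvPolynomial.monomial lam (1:K) * Gof p =
      MvPolynomial.monomial (lam + p.1) (1:K) - MvPolynomial.monomial lam (1:K) * p.2 := by
    rw [Gof, mul_sub, MvPolynomial.monomial_mul, one_mul]
  rw [this]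

lemma red_preserve (hPtrans : ∀ m k l, P m k → P k l → P m l)
    (hPmul : ∀ lam m k : X →₀ ℕ, P m k → P (lam + m) (lam + k))
    (hS2 : ∀ p ∈ S, ∀ k, MvPolynomial.coeff k p.2 ≠ 0 → P k p.1)
    (W : Set (X →₀ ℕ)) (hW : ∀ m ∈ W, ∀ k, P k m → k ∈ W)
    {t : Function.End (MvPolynomial X K)} (ht : t ∈ Submonoid.closure (T1B S)) :
    ∀ b : MvPolynomial X K, (∀ k, MvPolynomial.coeff k b ≠ 0 → k ∈ W) →
      (∀ k, MvPolynomial.coeff k (t b) ≠ 0 → k ∈ W) ∧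
      b - t b ∈ SpanT S (fun ν s => ν + s.1 ∈ W) := by
  induction ht using Submonoid.closure_induction with
  | mem t ht =>
    obtain ⟨lam, p, hp, htb⟩ := T1B_eq ht
    intro b hb
    rw [htb b]
    set c := MvPolynomial.coeff (lam + p.1) b with hc
    by_cases hc0 : c = 0
    · rw [hc0, zero_smul, sub_zero]
      exact ⟨hb, by simp [sub_self, Submodule.zero_mem]⟩
    · have hmem : lam + p.1 ∈ W := hb _ hc0
      constructor
      · intro k hk
        rw [MvPolynomial.coeff_sub, MvPolynomial.coeff_smul, smul_eq_mul] at hk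
        by_cases hkb : MvPolynomial.coeff k b = 0
        · have h2 : MvPolynomial.coeff k (MvPolynomial.monomial lam (1:K) * Gof p) ≠ 0 := by
            intro h0; simp [hkb, h0] at hk
          rcases coeff_term_ne hPmul (hS2 p hp) h2 with rfl | hlt
          · exact hmem
          · exact hW _ hmem _ hlt
        · exact hb k hkb
      · have : b - (b - c • (MvPolynomial.monomial lam (1:K) * Gof p)) =
            c • (MvPolynomial.monomial lam (1:K) * Gof p) := by ring
        rw [this]
        exact Submodule.smul_mem _ _ (Submodule.subset_span ⟨p, hp, lam, hmem, rfl⟩)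
  | one =>
    intro b hb
    refine ⟨hb, ?_⟩
    show b - b ∈ _
    simp [Submodule.zero_mem]
  | mul x y hx hy ihx ihy =>
    intro b hb
    obtain ⟨h1, h2⟩ := ihy b hb
    obtain ⟨h3, h4⟩ := ihx (y b) h1
    refine ⟨h3, ?_⟩
    have : b - (x * y) b = (b - y b) + (y b - x (y b)) := by
      show b - x (y b) = _
      ring
    rw [this]
    exact Submodule.add_mem _ h2 h4

end Aux2
section Aux3

attribute [local instance] Classical.propDecidable

open MvPolynomial

variable {K X : Type*} [Field K]
variable {P : (X →₀ ℕ) → (X →₀ ℕ) → Prop}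
variable {S : Set ((X →₀ ℕ) × MvPolynomial X K)}

lemma smul_term_mem_ISB {p : (X →₀ ℕ) × MvPolynomial X K} (hp : p ∈ S) (c : K) (lam : X →₀ ℕ) :
    c • (MvPolynomial.monomial lam (1:K) * Gof p) ∈ ISB (T1B S) := by
  rw [ISB, SetLike.mem_coe]
  apply AddSubgroup.subset_closure
  refine ⟨MvPolynomial.monomial (lam + p.1) c,
    (fun b => b - MvPolynomial.coeff (lam + p.1) b •
      (MvPolynomial.monomial (lam + p.1) (1 : K) -
        MvPolynomial.monomial lam (1 : K) * p.2)), ?_, ?_⟩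
  · exact Submonoid.subset_closure ⟨lam, p, hp, rfl⟩
  · have hc : MvPolynomial.coeff (lam + p.1) (MvPolynomial.monomial (lam + p.1) c) = c := by
      simp [MvPolynomial.coeff_monomial]
    simp only [hc]
    have : MvPolynomial.monomial lam (1:K) * Gof p =
        MvPolynomial.monomial (lam + p.1) (1:K) - MvPolynomial.monomial lam (1:K) * p.2 := by
      rw [Gof, mul_sub, MvPolynomial.monomial_mul, one_mul]
    rw [this]
    ring

lemma ISB_mem_iff {T1 : Set (Function.End (MvPolynomial X K))} {x : MvPolynomial X K} :
    x ∈ ISB T1 ↔ x ∈ AddSubgroup.closure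
      {x : MvPolynomial X K | ∃ b : MvPolynomial X K, ∃ t ∈ Tclos T1, x = b - t b} :=
  Iff.rfl

lemma sub_mem_ISB {T1 : Set (Function.End (MvPolynomial X K))} {x y : MvPolynomial X K}
    (hx : x ∈ ISB T1) (hy : y ∈ ISB T1) : x - y ∈ ISB T1 :=
  AddSubgroup.sub_mem _ hx hy

lemma ISB_subset_span (hPtrans : ∀ m k l, P m k → P k l → P m l)
    (hPmul : ∀ lam m k : X →₀ ℕ, P m k → P (lam + m) (lam + k))
    (hS2 : ∀ p ∈ S, ∀ k, MvPolynomial.coeff k p.2 ≠ 0 → P k p.1) :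
    ISB (T1B S) ⊆ ↑(SpanT S (fun ν s => ν + s.1 ∈ (Set.univ : Set (X →₀ ℕ)))) := by
  intro x hx
  rw [ISB_mem_iff] at hx
  rw [SetLike.mem_coe]
  refine AddSubgroup.closure_le ((SpanT S _).toAddSubgroup) |>.mpr ?_ hx
  rintro y ⟨b, t, ht, rfl⟩
  exact (red_preserve hPtrans hPmul hS2 Set.univ (fun _ _ _ _ => Set.mem_univ _) ht b
    (fun _ _ => Set.mem_univ _)).2

/-- term of a representation: coefficient, monomial shift, rule -/
noncomputable def tval (e : K × (X →₀ ℕ) × ((X →₀ ℕ) × MvPolynomial X K)) : MvPolynomial X K :=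
  e.1 • (MvPolynomial.monomial e.2.1 (1:K) * Gof e.2.2)

noncomputable def tdeg (e : K × (X →₀ ℕ) × ((X →₀ ℕ) × MvPolynomial X K)) : X →₀ ℕ := e.2.1 + e.2.2.1

noncomputable def rval (R : Multiset (K × (X →₀ ℕ) × ((X →₀ ℕ) × MvPolynomial X K))) :
    MvPolynomial X K := (R.map tval).sum

lemma rval_cons (e : K × (X →₀ ℕ) × ((X →₀ ℕ) × MvPolynomial X K)) (R) :
    rval (e ::ₘ R) = tval e + rval R := by
  rw [rval, Multiset.map_cons, Multiset.sum_cons]; rfl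

lemma rval_add (R1 R2 : Multiset (K × (X →₀ ℕ) × ((X →₀ ℕ) × MvPolynomial X K))) :
    rval (R1 + R2) = rval R1 + rval R2 := by
  rw [rval, Multiset.map_add, Multiset.sum_add]; rfl

lemma span_to_rep {C : (X →₀ ℕ) → ((X →₀ ℕ) × MvPolynomial X K) → Prop}
    {a : MvPolynomial X K} (ha : a ∈ SpanT S C) :
    ∃ R : Multiset (K × (X →₀ ℕ) × ((X →₀ ℕ) × MvPolynomial X K)),
      (∀ e ∈ R, e.2.2 ∈ S ∧ C e.2.1 e.2.2) ∧ rval R = a := by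
  induction ha using Submodule.span_induction with
  | mem x hx =>
    obtain ⟨s, hs, ν, hC, rfl⟩ := hx
    exact ⟨{(1, ν, s)}, by simp [hs, hC], by simp [rval, tval]⟩
  | zero => exact ⟨0, by simp, by simp [rval]⟩
  | add x y hx hy ihx ihy =>
    obtain ⟨R1, h1, h2⟩ := ihx
    obtain ⟨R2, h3, h4⟩ := ihy
    exact ⟨R1 + R2, fun e he => by
        rcases Multiset.mem_add.1 he with h | h
        exacts [h1 e h, h3 e h],
      by rw [rval_add, h2, h4]⟩
  | smul c x hx ih =>
    obtain ⟨R, h1, h2⟩ := ih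
    refine ⟨R.map (fun e => (c * e.1, e.2)), ?_, ?_⟩
    · intro e he
      obtain ⟨e', he', rfl⟩ := Multiset.mem_map.1 he
      exact h1 e' he'
    · rw [rval, Multiset.map_map]
      have : (tval ∘ fun e : K × (X →₀ ℕ) × ((X →₀ ℕ) × MvPolynomial X K) => (c * e.1, e.2)) =
          fun e => c • tval e := by
        funext e; simp [tval, mul_smul]
      rw [this, show (fun e : K × (X →₀ ℕ) × ((X →₀ ℕ) × MvPolynomial X K) => c • tval e) =
        ((c • ·) ∘ tval) from rfl, ← Multiset.map_map, ← Multiset.smul_sum, ← h2]; rfl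

lemma rep_supp (hPmul : ∀ lam m k : X →₀ ℕ, P m k → P (lam + m) (lam + k))
    (hS2 : ∀ p ∈ S, ∀ k, MvPolynomial.coeff k p.2 ≠ 0 → P k p.1)
    (R : Multiset (K × (X →₀ ℕ) × ((X →₀ ℕ) × MvPolynomial X K)))
    (hR : ∀ e ∈ R, e.2.2 ∈ S) (k : X →₀ ℕ) (h : MvPolynomial.coeff k (rval R) ≠ 0) :
    ∃ e ∈ R, k = tdeg e ∨ P k (tdeg e) := by
  induction R using Multiset.induction_on with
  | empty => simp [rval] at h
  | cons e R ih =>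
    rw [rval_cons, MvPolynomial.coeff_add] at h
    by_cases h1 : MvPolynomial.coeff k (tval e) = 0
    · obtain ⟨e', he', hd⟩ := ih (fun e' he' => hR e' (Multiset.mem_cons_of_mem he'))
        (by simpa [h1] using h)
      exact ⟨e', Multiset.mem_cons_of_mem he', hd⟩
    · rw [tval, MvPolynomial.coeff_smul, smul_eq_mul] at h1
      have h2 := right_ne_zero_of_mul h1
      exact ⟨e, Multiset.mem_cons_self e R,
        coeff_term_ne hPmul (hS2 _ (hR e (Multiset.mem_cons_self e R))) h2⟩

lemma rep_coeff_top (hPirr : ∀ m, ¬ P m m)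
    (hPtrans : ∀ m k l, P m k → P k l → P m l)
    (hS2 : ∀ p ∈ S, ∀ k, MvPolynomial.coeff k p.2 ≠ 0 → P k p.1)
    (hPmul : ∀ lam m k : X →₀ ℕ, P m k → P (lam + m) (lam + k))
    (δ : X →₀ ℕ) (R : Multiset (K × (X →₀ ℕ) × ((X →₀ ℕ) × MvPolynomial X K)))
    (hR : ∀ e ∈ R, e.2.2 ∈ S ∧ (tdeg e = δ ∨ P (tdeg e) δ)) :
    MvPolynomial.coeff δ (rval R) =
      ((R.filter (fun e => tdeg e = δ)).map (fun e => e.1)).sum := by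
  induction R using Multiset.induction_on with
  | empty => simp [rval]
  | cons e R ih =>
    have he := hR e (Multiset.mem_cons_self e R)
    rw [rval_cons, MvPolynomial.coeff_add,
      ih (fun e' he' => hR e' (Multiset.mem_cons_of_mem he'))]
    rcases he.2 with hd | hd
    · rw [Multiset.filter_cons_of_pos (p := fun e => tdeg e = δ) _ hd, Multiset.map_cons, Multiset.sum_cons]
      congr 1
      rw [tval, MvPolynomial.coeff_smul, smul_eq_mul, ← hd, tdeg,
        coeff_term_self hPirr (hS2 _ he.1), mul_one]
    · have hne : ¬ (tdeg e = δ) := fun h => hPirr δ (h ▸ hd)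
      rw [Multiset.filter_cons_of_neg (p := fun e => tdeg e = δ) _ hne]
      have : MvPolynomial.coeff δ (tval e) = 0 := by
        by_contra h0
        rw [tval, MvPolynomial.coeff_smul, smul_eq_mul] at h0
        rcases coeff_term_ne hPmul (hS2 _ he.1) (right_ne_zero_of_mul h0) with h | h
        · exact hne h.symm
        · exact hPirr δ (hPtrans _ _ _ h hd)
      rw [this, zero_add]

end Aux3
section Aux4

attribute [local instance] Classical.propDecidable

open MvPolynomial

variable {K X : Type*} [Field K]
variable {P : (X →₀ ℕ) → (X →₀ ℕ) → Prop}
variable {S : Set ((X →₀ ℕ) × MvPolynomial X K)}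

lemma mul_G_mem {C : (X →₀ ℕ) → ((X →₀ ℕ) × MvPolynomial X K) → Prop}
    {s : (X →₀ ℕ) × MvPolynomial X K} (hs : s ∈ S) (b : MvPolynomial X K)
    (hb : ∀ k, MvPolynomial.coeff k b ≠ 0 → C k s) : b * Gof s ∈ SpanT S C := by
  rw [← MvPolynomial.support_sum_monomial_coeff b, Finset.sum_mul]
  apply Submodule.sum_mem
  intro k hk
  have : (MvPolynomial.monomial k (MvPolynomial.coeff k b) : MvPolynomial X K) * Gof s
      = (MvPolynomial.coeff k b) • (MvPolynomial.monomial k (1:K) * Gof s) := by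
    rw [← smul_mul_assoc, MvPolynomial.smul_monomial, smul_eq_mul, mul_one]
  rw [this]
  exact Submodule.smul_mem _ _ (Submodule.subset_span
    ⟨s, hs, k, hb k (MvPolynomial.mem_support_iff.mp hk), rfl⟩)

lemma spanT_shift {C C' : (X →₀ ℕ) → ((X →₀ ℕ) × MvPolynomial X K) → Prop} (τ : X →₀ ℕ)
    (hCC : ∀ ν s, s ∈ S → C ν s → C' (τ + ν) s) {x : MvPolynomial X K} (hx : x ∈ SpanT S C) :
    MvPolynomial.monomial τ (1:K) * x ∈ SpanT S C' := by
  induction hx using Submodule.span_induction with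
  | mem y hy =>
    obtain ⟨s, hs, ν, hC, rfl⟩ := hy
    rw [← mul_assoc, MvPolynomial.monomial_mul, one_mul]
    exact Submodule.subset_span ⟨s, hs, τ + ν, hCC ν s hs hC, rfl⟩
  | zero => simp
  | add x y _ _ hx hy => rw [mul_add]; exact Submodule.add_mem _ hx hy
  | smul c x _ hx => rw [mul_smul_comm]; exact Submodule.smul_mem _ _ hx

lemma spanT_mono {C C' : (X →₀ ℕ) → ((X →₀ ℕ) × MvPolynomial X K) → Prop}
    (h : ∀ ν s, s ∈ S → C ν s → C' ν s) : SpanT S C ≤ SpanT S C' :=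
  Submodule.span_mono (by rintro x ⟨s, hs, ν, hC, rfl⟩; exact ⟨s, hs, ν, h ν s hs hC, rfl⟩)

lemma sup_eq_add_of_inf_eq_zero {a b : X →₀ ℕ} (h : a ⊓ b = 0) : a ⊔ b = a + b := by
  ext x
  have h0 : a x ⊓ b x = 0 := by
    have := congrArg (fun f : X →₀ ℕ => f x) h
    simpa [Finsupp.inf_apply] using this
  have h1 : (a ⊔ b) x = a x ⊔ b x := Finsupp.sup_apply a b x
  rw [Finsupp.add_apply, h1]
  change min (a x) (b x) = 0 at h0; change max (a x) (b x) = a x + b x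
  omega

lemma Zpol_eq (s1 s2 : (X →₀ ℕ) × MvPolynomial X K) :
    Zpol s1 s2 = MvPolynomial.monomial (s1.1 ⊔ s2.1 - s2.1) (1:K) * Gof s2 -
      MvPolynomial.monomial (s1.1 ⊔ s2.1 - s1.1) (1:K) * Gof s1 := by
  rw [Zpol, Gof, Gof, mul_sub, mul_sub, MvPolynomial.monomial_mul, MvPolynomial.monomial_mul,
    one_mul, tsub_add_cancel_of_le (le_sup_right : s2.1 ≤ s1.1 ⊔ s2.1),
    tsub_add_cancel_of_le (le_sup_left : s1.1 ≤ s1.1 ⊔ s2.1)]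
  ring

lemma Z_supp (hPmul : ∀ lam m k : X →₀ ℕ, P m k → P (lam + m) (lam + k))
    (hS2 : ∀ p ∈ S, ∀ k, MvPolynomial.coeff k p.2 ≠ 0 → P k p.1)
    {s1 s2 : (X →₀ ℕ) × MvPolynomial X K} (h1 : s1 ∈ S) (h2 : s2 ∈ S) {k : X →₀ ℕ}
    (h : MvPolynomial.coeff k (Zpol s1 s2) ≠ 0) : P k (s1.1 ⊔ s2.1) := by
  rw [Zpol, MvPolynomial.coeff_sub] at h
  have key : ∀ (s : (X →₀ ℕ) × MvPolynomial X K), s ∈ S → s.1 ≤ s1.1 ⊔ s2.1 →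
      MvPolynomial.coeff k (MvPolynomial.monomial (s1.1 ⊔ s2.1 - s.1) (1:K) * s.2) ≠ 0 →
      P k (s1.1 ⊔ s2.1) := by
    intro s hs hle hne
    obtain ⟨ρ, rfl, hρ⟩ := coeff_monomial_mul_ne hne
    have := hPmul (s1.1 ⊔ s2.1 - s.1) _ _ (hS2 s hs ρ hρ)
    rwa [tsub_add_cancel_of_le hle] at this
  by_cases hc : MvPolynomial.coeff k
      (MvPolynomial.monomial (s1.1 ⊔ s2.1 - s1.1) (1:K) * s1.2) = 0
  · exact key s2 h2 le_sup_right (by intro h0; simp [hc, h0] at h)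
  · exact key s1 h1 le_sup_left hc

lemma Z_mem_span (hPtrans : ∀ m k l, P m k → P k l → P m l)
    (hPmul : ∀ lam m k : X →₀ ℕ, P m k → P (lam + m) (lam + k))
    (hS2 : ∀ p ∈ S, ∀ k, MvPolynomial.coeff k p.2 ≠ 0 → P k p.1)
    {s1 s2 : (X →₀ ℕ) × MvPolynomial X K} (h1 : s1 ∈ S) (h2 : s2 ∈ S)
    (hcrit : s1.1 ⊓ s2.1 ≠ 0 → ∃ t ∈ Tclos (T1B S), t (Zpol s1 s2) = 0) :
    Zpol s1 s2 ∈ SpanT S (fun ν s => P (ν + s.1) (s1.1 ⊔ s2.1)) := by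
  have hPmul' : ∀ lam m k : X →₀ ℕ, P m k → P (m + lam) (k + lam) := by
    intro lam m k h
    rw [add_comm m, add_comm k]; exact hPmul lam m k h
  by_cases hcop : s1.1 ⊓ s2.1 = 0
  · have hL : s1.1 ⊔ s2.1 = s1.1 + s2.1 := sup_eq_add_of_inf_eq_zero hcop
    have e1 : s1.1 ⊔ s2.1 - s2.1 = s1.1 := by rw [hL, add_tsub_cancel_right]
    have e2 : s1.1 ⊔ s2.1 - s1.1 = s2.1 := by rw [hL, add_tsub_cancel_left]
    have hZ : Zpol s1 s2 = s1.2 * Gof s2 - s2.2 * Gof s1 := by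
      rw [Zpol, e1, e2, Gof, Gof]; ring
    rw [hZ]
    apply Submodule.sub_mem
    · refine mul_G_mem h2 _ (fun k hk => ?_)
      have := hPmul' s2.1 _ _ (hS2 s1 h1 k hk)
      rwa [← hL] at this
    · refine mul_G_mem h1 _ (fun k hk => ?_)
      have := hPmul' s1.1 _ _ (hS2 s2 h2 k hk)
      rw [add_comm s2.1 s1.1, ← hL] at this; exact this
  · obtain ⟨t, ht, ht0⟩ := hcrit hcop
    have hred := red_preserve hPtrans hPmul hS2 {k | P k (s1.1 ⊔ s2.1)}
      (fun m hm k hk => hPtrans _ _ _ hk hm) ht (Zpol s1 s2)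
      (fun k hk => Z_supp hPmul hS2 h1 h2 hk)
    have := hred.2
    rw [ht0, sub_zero] at this
    exact this

lemma rval_filter_ne_zero (R : Multiset (K × (X →₀ ℕ) × ((X →₀ ℕ) × MvPolynomial X K))) :
    rval (R.filter (fun e => e.1 ≠ 0)) = rval R := by
  induction R using Multiset.induction_on with
  | empty => simp
  | cons e R ih =>
    by_cases h : e.1 ≠ 0
    · rw [Multiset.filter_cons_of_pos (p := fun e : K × (X →₀ ℕ) × ((X →₀ ℕ) × MvPolynomial X K) => e.1 ≠ 0) _ h, rval_cons, rval_cons, ih]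
    · rw [Multiset.filter_cons_of_neg (p := fun e : K × (X →₀ ℕ) × ((X →₀ ℕ) × MvPolynomial X K) => e.1 ≠ 0) _ h, rval_cons, ih]
      have : tval e = 0 := by rw [tval, not_not.mp h, zero_smul]
      rw [this, zero_add]

end Aux4
section Aux5

attribute [local instance] Classical.propDecidable

open MvPolynomial

variable {K X : Type*} [Field K]
variable {P : (X →₀ ℕ) → (X →₀ ℕ) → Prop}
variable {S : Set ((X →₀ ℕ) × MvPolynomial X K)}

lemma main_div
    (hPirr : ∀ m, ¬ P m m)
    (hPtrans : ∀ m k l, P m k → P k l → P m l)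
    (hPtotal : ∀ m k : X →₀ ℕ, m ≠ k → P m k ∨ P k m)
    (hPwf : WellFounded P)
    (hPmul : ∀ lam m k : X →₀ ℕ, P m k → P (lam + m) (lam + k))
    (hS2 : ∀ p ∈ S, ∀ k, MvPolynomial.coeff k p.2 ≠ 0 → P k p.1)
    (hcrit : ∀ s1 ∈ S, ∀ s2 ∈ S, s1.1 ⊓ s2.1 ≠ 0 → ∃ t ∈ Tclos (T1B S), t (Zpol s1 s2) = 0) :
    ∀ d : (X →₀ ℕ) × ℕ,
      ∀ R : Multiset (K × (X →₀ ℕ) × ((X →₀ ℕ) × MvPolynomial X K)),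
      (∀ e ∈ R, e.2.2 ∈ S ∧ e.1 ≠ 0 ∧ (tdeg e = d.1 ∨ P (tdeg e) d.1)) →
      Multiset.card (R.filter (fun e => tdeg e = d.1)) = d.2 →
      ∀ m, MvPolynomial.coeff m (rval R) ≠ 0 →
        (∀ k, MvPolynomial.coeff k (rval R) ≠ 0 → ¬ P m k) →
      ∃ s ∈ S, ∃ lam, m = lam + s.1 := by
  have wf : WellFounded (Prod.Lex P ((· < ·) : ℕ → ℕ → Prop)) :=
    hPwf.prod_lex wellFounded_lt
  intro d
  induction d using wf.induction with
  | _ d IH =>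
  obtain ⟨δ, n⟩ := d
  intro R hR hcard m hm hmax
  replace hR : ∀ e ∈ R, e.2.2 ∈ S ∧ e.1 ≠ 0 ∧ (tdeg e = δ ∨ P (tdeg e) δ) := hR
  replace hcard : Multiset.card (R.filter (fun e => tdeg e = δ)) = n := hcard
  by_cases hn : n = 0
  · -- no terms of top degree δ : find the true maximum and recurse
    subst hn
    have h0 : R.filter (fun e => tdeg e = δ) = 0 := Multiset.card_eq_zero.mp hcard
    have hfil : ∀ e ∈ R, ¬ (tdeg e = δ) := by
      intro e he hde
      have : e ∈ R.filter (fun e => tdeg e = δ) := Multiset.mem_filter.mpr ⟨he, hde⟩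
      rw [h0] at this
      exact Multiset.notMem_zero e this
    rcases Multiset.empty_or_exists_mem R with rfl | ⟨e₀, he₀⟩
    · simp [rval] at hm
    · have hne : ((R.map tdeg).toFinset).Nonempty :=
        ⟨tdeg e₀, by rw [Multiset.mem_toFinset]; exact Multiset.mem_map_of_mem _ he₀⟩
      obtain ⟨δ', hδ'mem, hδ'max⟩ := exists_max hPirr hPtrans hPtotal _ hne
      obtain ⟨e₁, he₁, he₁d⟩ : ∃ e ∈ R, tdeg e = δ' := by
        rw [Multiset.mem_toFinset, Multiset.mem_map] at hδ'mem
        obtain ⟨e, he, hed⟩ := hδ'mem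
        exact ⟨e, he, hed⟩
      have hlt : P δ' δ := by
        rcases (hR e₁ he₁).2.2 with h | h
        · exact absurd h (he₁d ▸ hfil e₁ he₁)
        · exact he₁d ▸ h
      have hbound : ∀ e ∈ R, tdeg e = δ' ∨ P (tdeg e) δ' := by
        intro e he
        rcases eq_or_ne (tdeg e) δ' with h | h
        · exact Or.inl h
        · rcases hPtotal _ _ h with h' | h'
          · exact Or.inr h'
          · exact absurd h' (hδ'max (tdeg e)
              (by rw [Multiset.mem_toFinset]; exact Multiset.mem_map_of_mem _ he))
      exact IH (δ', Multiset.card (R.filter (fun e => tdeg e = δ')))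
        (Prod.Lex.left _ _ hlt) R
        (fun e he => ⟨(hR e he).1, (hR e he).2.1, hbound e he⟩) rfl m hm hmax
  · have hFne : R.filter (fun e => tdeg e = δ) ≠ 0 := by
      intro h0
      rw [h0] at hcard
      simp at hcard
      exact hn hcard.symm
    obtain ⟨e₁, he₁F⟩ := Multiset.exists_mem_of_ne_zero hFne
    have he₁R : e₁ ∈ R := (Multiset.mem_filter.mp he₁F).1
    have he₁δ : tdeg e₁ = δ := (Multiset.mem_filter.mp he₁F).2
    by_cases hc : MvPolynomial.coeff δ (rval R) = 0
    swap
    · -- the leading monomial is δ itself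
      have h1 : m = δ ∨ P m δ := by
        obtain ⟨e, he, hd⟩ := rep_supp hPmul hS2 R (fun e he => (hR e he).1) m hm
        rcases hd with rfl | hd
        · exact (hR e he).2.2
        · rcases (hR e he).2.2 with h | h
          · exact Or.inr (h ▸ hd)
          · exact Or.inr (hPtrans _ _ _ hd h)
      have hmδ : m = δ := by
        rcases h1 with h | h
        · exact h
        · exact absurd h (hmax δ hc)
      exact ⟨e₁.2.2, (hR e₁ he₁R).1, e₁.2.1, by rw [hmδ, ← he₁δ]; rfl⟩
    · -- top coefficients cancel : rewrite using an S-polynomial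
      have hsum : ((R.filter (fun e => tdeg e = δ)).map (fun e => e.1)).sum = 0 := by
        rw [← rep_coeff_top hPirr hPtrans hS2 hPmul δ R
          (fun e he => ⟨(hR e he).1, (hR e he).2.2⟩)]
        exact hc
      have hn2 : 2 ≤ n := by
        by_contra h
        have hn1 : n = 1 := by omega
        obtain ⟨a, ha⟩ := Multiset.card_eq_one.mp (hcard.trans hn1)
        rw [ha] at he₁F hsum
        rw [Multiset.mem_singleton] at he₁F
        subst he₁F
        simp at hsum
        exact (hR e₁ he₁R).2.1 hsum
      have hcard' : 1 ≤ Multiset.card ((R.filter (fun e => tdeg e = δ)).erase e₁) := by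
        rw [Multiset.card_erase_of_mem he₁F, hcard, Nat.pred_eq_sub_one]; omega
      have hErne : (R.filter (fun e => tdeg e = δ)).erase e₁ ≠ 0 := by
        intro h0; rw [h0] at hcard'; simp at hcard'
      obtain ⟨e₂, he₂F⟩ := Multiset.exists_mem_of_ne_zero hErne
      have he₂R' : e₂ ∈ R.erase e₁ :=
        Multiset.mem_of_le (Multiset.erase_le_erase e₁ (Multiset.filter_le _ R)) he₂F
      have he₂δ : tdeg e₂ = δ :=
        (Multiset.mem_filter.mp (Multiset.mem_of_mem_erase he₂F)).2
      have he₂R : e₂ ∈ R := Multiset.mem_of_mem_erase he₂R'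
      obtain ⟨c₁, ν₁, s₁⟩ := e₁
      obtain ⟨c₂, ν₂, s₂⟩ := e₂
      have hs₁S : s₁ ∈ S := (hR _ he₁R).1
      have hs₂S : s₂ ∈ S := (hR _ he₂R).1
      have hδ1 : ν₁ + s₁.1 = δ := he₁δ
      have hδ2 : ν₂ + s₂.1 = δ := he₂δ
      set R' := (R.erase (c₁, ν₁, s₁)).erase (c₂, ν₂, s₂) with hR'def
      have hRdecomp : R = (c₁, ν₁, s₁) ::ₘ (c₂, ν₂, s₂) ::ₘ R' := by
        rw [hR'def, Multiset.cons_erase he₂R', Multiset.cons_erase he₁R]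
      set L := s₁.1 ⊔ s₂.1 with hLdef
      have hLδ : L ≤ δ := by
        apply sup_le
        · rw [← hδ1]; exact le_add_self
        · rw [← hδ2]; exact le_add_self
      set τ := δ - L with hτdef
      have hτ : τ + L = δ := tsub_add_cancel_of_le hLδ
      have hZs : Zpol s₁ s₂ ∈ SpanT S (fun ν s => P (ν + s.1) L) :=
        Z_mem_span hPtrans hPmul hS2 hs₁S hs₂S (hcrit s₁ hs₁S s₂ hs₂S)
      have hx : MvPolynomial.monomial τ (1:K) * Zpol s₁ s₂ ∈
          SpanT S (fun ν s => P (ν + s.1) δ) := by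
        refine spanT_shift τ (fun ν s _ h => ?_) hZs
        have := hPmul τ _ _ h
        rwa [← add_assoc, hτ] at this
      have hν₂' : τ + (L - s₂.1) = ν₂ := by
        have : (τ + (L - s₂.1)) + s₂.1 = ν₂ + s₂.1 := by
          rw [add_assoc, tsub_add_cancel_of_le (le_sup_right : s₂.1 ≤ L), hτ, hδ2]
        exact add_right_cancel this
      have hν₁' : τ + (L - s₁.1) = ν₁ := by
        have : (τ + (L - s₁.1)) + s₁.1 = ν₁ + s₁.1 := by
          rw [add_assoc, tsub_add_cancel_of_le (le_sup_left : s₁.1 ≤ L), hτ, hδ1]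
        exact add_right_cancel this
      have hτZ : MvPolynomial.monomial τ (1:K) * Zpol s₁ s₂ =
          MvPolynomial.monomial ν₂ (1:K) * Gof s₂ - MvPolynomial.monomial ν₁ (1:K) * Gof s₁ := by
        rw [Zpol_eq, mul_sub, ← mul_assoc, ← mul_assoc, MvPolynomial.monomial_mul,
          MvPolynomial.monomial_mul, one_mul, hν₂', hν₁']
      have hkey : tval (c₁, ν₁, s₁) + tval (c₂, ν₂, s₂) =
          (-c₁) • (MvPolynomial.monomial τ (1:K) * Zpol s₁ s₂) +
          (c₁ + c₂) • (MvPolynomial.monomial ν₂ (1:K) * Gof s₂) := by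
        rw [hτZ]
        show c₁ • (MvPolynomial.monomial ν₁ (1:K) * Gof s₁) +
          c₂ • (MvPolynomial.monomial ν₂ (1:K) * Gof s₂) = _
        module
      obtain ⟨R_Z, hRZ, hRZval⟩ := span_to_rep
        (Submodule.smul_mem _ (-c₁) hx)
      set mid : K × (X →₀ ℕ) × ((X →₀ ℕ) × MvPolynomial X K) := (c₁ + c₂, ν₂, s₂) with hmid
      set R_new := (R_Z + (mid ::ₘ R')).filter (fun e => e.1 ≠ 0) with hRnew
      have hmidv : tval mid = (c₁ + c₂) • (MvPolynomial.monomial ν₂ (1:K) * Gof s₂) := rfl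
      have hval : rval R_new = rval R := by
        rw [hRnew, rval_filter_ne_zero, rval_add, rval_cons, hRZval, hmidv, ← add_assoc,
          ← hkey, hRdecomp, rval_cons, rval_cons, add_assoc]
      have hinv : ∀ e ∈ R_new, e.2.2 ∈ S ∧ e.1 ≠ 0 ∧ (tdeg e = δ ∨ P (tdeg e) δ) := by
        intro e he
        rw [hRnew] at he
        have hene : e.1 ≠ 0 := (Multiset.mem_filter.mp he).2
        have he' : e ∈ R_Z + (mid ::ₘ R') := (Multiset.mem_filter.mp he).1
        rcases Multiset.mem_add.mp he' with h | h
        · exact ⟨(hRZ e h).1, hene, Or.inr (hRZ e h).2⟩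
        · rcases Multiset.mem_cons.mp h with rfl | h
          · exact ⟨hs₂S, hene, Or.inl hδ2⟩
          · have heR : e ∈ R := by
              rw [hRdecomp]
              exact Multiset.mem_cons_of_mem (Multiset.mem_cons_of_mem h)
            exact ⟨(hR e heR).1, hene, (hR e heR).2.2⟩
      have hcard2 : Multiset.card (R'.filter (fun e => tdeg e = δ)) = n - 2 := by
        have hfilR : R.filter (fun e => tdeg e = δ) =
            (c₁, ν₁, s₁) ::ₘ (c₂, ν₂, s₂) ::ₘ R'.filter (fun e => tdeg e = δ) := by
          conv_lhs => rw [hRdecomp]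
          rw [Multiset.filter_cons_of_pos (p := fun e => tdeg e = δ) _ he₁δ,
            Multiset.filter_cons_of_pos (p := fun e => tdeg e = δ) _ he₂δ]
        rw [hfilR] at hcard
        simp at hcard
        omega
      have hcardnew : Multiset.card (R_new.filter (fun e => tdeg e = δ)) < n := by
        have hle : R_new.filter (fun e => tdeg e = δ) ≤
            (R_Z + (mid ::ₘ R')).filter (fun e => tdeg e = δ) :=
          Multiset.filter_le_filter _ (Multiset.filter_le _ _)
        have hRZ0 : R_Z.filter (fun e => tdeg e = δ) = 0 := by
          rw [Multiset.filter_eq_nil]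
          intro e he hde
          exact hPirr δ (hde ▸ (hRZ e he).2)
        have := Multiset.card_le_card hle
        rw [Multiset.filter_add, hRZ0, Multiset.card_add, Multiset.card_zero] at this
        have h2 : Multiset.card ((mid ::ₘ R').filter (fun e => tdeg e = δ)) ≤
            1 + Multiset.card (R'.filter (fun e => tdeg e = δ)) := by
          by_cases hmidδ : tdeg mid = δ
          · rw [Multiset.filter_cons_of_pos (p := fun e => tdeg e = δ) _ hmidδ,
              Multiset.card_cons]
            omega
          · rw [Multiset.filter_cons_of_neg (p := fun e => tdeg e = δ) _ hmidδ]
            omega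
        omega
      have := IH (δ, Multiset.card (R_new.filter (fun e => tdeg e = δ)))
        (Prod.Lex.right δ hcardnew) R_new hinv rfl m
        (by rw [hval]; exact hm) (by rw [hval]; exact hmax)
      exact this

end Aux5
section Aux6

attribute [local instance] Classical.propDecidable

open MvPolynomial

variable {K X : Type*} [Field K]
variable {P : (X →₀ ℕ) → (X →₀ ℕ) → Prop}
variable {S : Set ((X →₀ ℕ) × MvPolynomial X K)}

lemma LMb_Gof (hPirr : ∀ m, ¬ P m m) (hPtrans : ∀ m k l, P m k → P k l → P m l)
    {s : (X →₀ ℕ) × MvPolynomial X K}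
    (hs2 : ∀ k, MvPolynomial.coeff k s.2 ≠ 0 → P k s.1) :
    LMb P (Gof s) = {s.1} := by
  ext m
  simp only [LMb, Set.mem_setOf_eq, Set.mem_singleton_iff, suppB]
  constructor
  · rintro ⟨h1, h2⟩
    rcases coeff_Gof_ne hs2 h1 with h | h
    · exact h
    · exact absurd h (h2 s.1 (by rw [coeff_Gof_self hPirr hs2]; exact one_ne_zero))
  · rintro rfl
    refine ⟨by rw [coeff_Gof_self hPirr hs2]; exact one_ne_zero, ?_⟩
    intro k hk hPk
    rcases coeff_Gof_ne hs2 hk with rfl | h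
    · exact hPirr _ hPk
    · exact hPirr _ (hPtrans _ _ _ hPk h)

lemma PMonic_Gof {s : (X →₀ ℕ) × MvPolynomial X K} (hs : s.2 ∈ DSMb P s.1) :
    PMonicB P (Gof s) := by
  refine ⟨s.1, ?_⟩
  have h : Gof s - MvPolynomial.monomial s.1 (1:K) = -s.2 := by rw [Gof]; ring
  rw [h, DSMb, SetLike.mem_coe]
  rw [DSMb, SetLike.mem_coe] at hs
  exact Submodule.neg_mem _ hs

lemma term_mem_ISB {p : (X →₀ ℕ) × MvPolynomial X K} (hp : p ∈ S) (lam : X →₀ ℕ) :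
    MvPolynomial.monomial lam (1:K) * Gof p ∈ ISB (T1B S) := by
  have := smul_term_mem_ISB (S := S) hp 1 lam
  rwa [one_smul] at this

lemma grobner_head (hPirr : ∀ m, ¬ P m m)
    (hPtrans : ∀ m k l, P m k → P k l → P m l)
    (hPtotal : ∀ m k : X →₀ ℕ, m ≠ k → P m k ∨ P k m)
    (hPwf : WellFounded P)
    (hPmul : ∀ lam m k : X →₀ ℕ, P m k → P (lam + m) (lam + k))
    (hS2 : ∀ p ∈ S, ∀ k, MvPolynomial.coeff k p.2 ≠ 0 → P k p.1)
    (hcrit : ∀ s1 ∈ S, ∀ s2 ∈ S, s1.1 ⊓ s2.1 ≠ 0 → ∃ t ∈ Tclos (T1B S), t (Zpol s1 s2) = 0) :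
    ∀ a ∈ ISB (T1B S), ∀ m ∈ LMb P a, ∃ s ∈ S, ∃ lam, m = lam + s.1 := by
  intro a ha m hm
  obtain ⟨hm1, hm2⟩ := hm
  have hm1 : MvPolynomial.coeff m a ≠ 0 := hm1
  have hm2 : ∀ k, MvPolynomial.coeff k a ≠ 0 → ¬ P m k := fun k hk => hm2 k hk
  obtain ⟨R₀, hR₀, hval⟩ := span_to_rep (ISB_subset_span hPtrans hPmul hS2 ha)
  set R := R₀.filter (fun e : K × (X →₀ ℕ) × ((X →₀ ℕ) × MvPolynomial X K) => e.1 ≠ 0)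
    with hRdef
  have hvalR : rval R = a := by rw [hRdef, rval_filter_ne_zero, hval]
  have hRS : ∀ e ∈ R, e.2.2 ∈ S ∧ e.1 ≠ 0 := by
    intro e he
    rw [hRdef] at he
    exact ⟨(hR₀ e (Multiset.mem_of_mem_filter he)).1, (Multiset.mem_filter.mp he).2⟩
  rcases Multiset.empty_or_exists_mem R with h0 | ⟨e₀, he₀⟩
  · rw [h0] at hvalR
    exact absurd (by rw [← hvalR]; simp [rval]) hm1
  · have hne : ((R.map tdeg).toFinset).Nonempty :=
      ⟨tdeg e₀, by rw [Multiset.mem_toFinset]; exact Multiset.mem_map_of_mem _ he₀⟩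
    obtain ⟨δ, hδmem, hδmax⟩ := exists_max hPirr hPtrans hPtotal _ hne
    have hbound : ∀ e ∈ R, tdeg e = δ ∨ P (tdeg e) δ := by
      intro e he
      rcases eq_or_ne (tdeg e) δ with h | h
      · exact Or.inl h
      · rcases hPtotal _ _ h with h' | h'
        · exact Or.inr h'
        · exact absurd h' (hδmax (tdeg e)
            (by rw [Multiset.mem_toFinset]; exact Multiset.mem_map_of_mem _ he))
    exact main_div hPirr hPtrans hPtotal hPwf hPmul hS2 hcrit
      (δ, Multiset.card (R.filter (fun e => tdeg e = δ))) R
      (fun e he => ⟨(hRS e he).1, (hRS e he).2, hbound e he⟩) rfl m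
      (by rw [hvalR]; exact hm1) (by rw [hvalR]; exact hm2)

lemma reduce0 (hPirr : ∀ m, ¬ P m m)
    (hPtrans : ∀ m k l, P m k → P k l → P m l)
    (hPtotal : ∀ m k : X →₀ ℕ, m ≠ k → P m k ∨ P k m)
    (hPwf : WellFounded P)
    (hPmul : ∀ lam m k : X →₀ ℕ, P m k → P (lam + m) (lam + k))
    (hS2 : ∀ p ∈ S, ∀ k, MvPolynomial.coeff k p.2 ≠ 0 → P k p.1)
    (hGB : IsGrobnerB P {x : MvPolynomial X K |
      ∃ p ∈ S, x = MvPolynomial.monomial p.1 (1 : K) - p.2} (ISB (T1B S))) :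
    ∀ a ∈ ISB (T1B S), ∃ t ∈ Tclos (T1B S), t a = 0 := by
  have step : ∀ a ∈ ISB (T1B S), ∀ m₀, MvPolynomial.coeff m₀ a ≠ 0 →
      (∀ k, MvPolynomial.coeff k a ≠ 0 → ¬ P m₀ k) →
      ∃ t₀ ∈ T1B S, t₀ a ∈ ISB (T1B S) ∧
        (∀ k, MvPolynomial.coeff k (t₀ a) ≠ 0 → P k m₀) := by
    intro a ha m₀ h1 h2
    obtain ⟨g, hg, lam, k, hLM, hmono⟩ := hGB.2.2 a ha m₀ ⟨h1, fun k hk => h2 k hk⟩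
    obtain ⟨p, hp, rfl⟩ := hg
    have hLM' : LMb P (Gof p) = {k} := hLM
    have hk : k = p.1 := by
      have h := LMb_Gof hPirr hPtrans (hS2 p hp)
      rw [hLM'] at h
      exact Set.singleton_eq_singleton_iff.mp h
    subst hk
    have hm₀ : m₀ = lam + p.1 := by
      rw [MvPolynomial.monomial_mul, one_mul] at hmono
      rcases (MvPolynomial.monomial_eq_monomial_iff _ _ _ _).mp hmono with ⟨h, _⟩ | ⟨h, _⟩
      · exact h
      · exact absurd h one_ne_zero
    have hterm : MvPolynomial.monomial (lam + p.1) (1:K) -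
        MvPolynomial.monomial lam (1:K) * p.2 =
        MvPolynomial.monomial lam (1:K) * Gof p := by
      rw [Gof, mul_sub, MvPolynomial.monomial_mul, one_mul]
    refine ⟨fun b => b - MvPolynomial.coeff (lam + p.1) b •
      (MvPolynomial.monomial (lam + p.1) (1:K) - MvPolynomial.monomial lam (1:K) * p.2),
      ⟨lam, p, hp, rfl⟩, ?_, ?_⟩
    · show a - MvPolynomial.coeff (lam + p.1) a • _ ∈ _
      rw [hterm]
      exact sub_mem_ISB ha (smul_term_mem_ISB hp _ lam)
    · intro k hk2
      have hk2 : MvPolynomial.coeff k (a - MvPolynomial.coeff (lam + p.1) a •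
          (MvPolynomial.monomial lam (1:K) * Gof p)) ≠ 0 := by
        rw [← hterm]; exact hk2
      rw [MvPolynomial.coeff_sub, MvPolynomial.coeff_smul, smul_eq_mul] at hk2
      rcases eq_or_ne k m₀ with rfl | hkm
      · exfalso
        rw [hm₀, coeff_term_self hPirr (hS2 p hp) lam, mul_one, sub_self] at hk2
        exact hk2 rfl
      · by_cases hka : MvPolynomial.coeff k a = 0
        · have h3 : MvPolynomial.coeff k (MvPolynomial.monomial lam (1:K) * Gof p) ≠ 0 := by
            intro h0; simp [hka, h0] at hk2
          rcases coeff_term_ne hPmul (hS2 p hp) h3 with h | h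
          · exact absurd (h.trans hm₀.symm) hkm
          · rw [← hm₀] at h; exact h
        · rcases hPtotal k m₀ hkm with h | h
          · exact h
          · exact absurd h (h2 k hka)
  have Hrec : ∀ m₀, ∀ a ∈ ISB (T1B S), (∀ k, MvPolynomial.coeff k a ≠ 0 → P k m₀) →
      ∃ t ∈ Tclos (T1B S), t a = 0 := by
    intro m₀
    induction m₀ using hPwf.induction with
    | _ m₀ IH =>
    intro a ha hbound
    rcases eq_or_ne a 0 with rfl | hane
    · exact ⟨1, Submonoid.one_mem _, rfl⟩
    · obtain ⟨m₁, hm₁mem, hm₁max⟩ := exists_max hPirr hPtrans hPtotal a.support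
        (MvPolynomial.support_nonempty.mpr hane)
      have h1 : MvPolynomial.coeff m₁ a ≠ 0 := MvPolynomial.mem_support_iff.mp hm₁mem
      have h2 : ∀ k, MvPolynomial.coeff k a ≠ 0 → ¬ P m₁ k :=
        fun k hk => hm₁max k (MvPolynomial.mem_support_iff.mpr hk)
      obtain ⟨t₀, ht₀, hmem, hsupp⟩ := step a ha m₁ h1 h2
      obtain ⟨t', ht', ht'0⟩ := IH m₁ (hbound m₁ h1) (t₀ a) hmem hsupp
      refine ⟨t' * t₀, ?_, ht'0⟩
      exact Submonoid.mul_mem _ ht' (Submonoid.subset_closure ht₀)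
  intro a ha
  rcases eq_or_ne a 0 with rfl | hane
  · exact ⟨1, Submonoid.one_mem _, rfl⟩
  · obtain ⟨m₁, hm₁mem, hm₁max⟩ := exists_max hPirr hPtrans hPtotal a.support
      (MvPolynomial.support_nonempty.mpr hane)
    have h1 : MvPolynomial.coeff m₁ a ≠ 0 := MvPolynomial.mem_support_iff.mp hm₁mem
    have h2 : ∀ k, MvPolynomial.coeff k a ≠ 0 → ¬ P m₁ k :=
      fun k hk => hm₁max k (MvPolynomial.mem_support_iff.mpr hk)
    obtain ⟨t₀, ht₀, hmem, hsupp⟩ := step a ha m₁ h1 h2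
    obtain ⟨t', ht', ht'0⟩ := Hrec m₁ (t₀ a) hmem hsupp
    refine ⟨t' * t₀, ?_, ht'0⟩
    exact Submonoid.mul_mem _ ht' (Submonoid.subset_closure ht₀)

end Aux6
theorem buchberger_criterion
    {K X : Type*} [Field K]
    (P : (X →₀ ℕ) → (X →₀ ℕ) → Prop)
    (hPirr : ∀ m, ¬ P m m)
    (hPtrans : ∀ m k l, P m k → P k l → P m l)
    (hPtotal : ∀ m k : X →₀ ℕ, m ≠ k → P m k ∨ P k m)
    (hPwf : WellFounded P)
    (hPmul : ∀ lam m k : X →₀ ℕ, P m k → P (lam + m) (lam + k))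
    (S : Set ((X →₀ ℕ) × MvPolynomial X K))
    (hS : ∀ p ∈ S, p.2 ∈ DSMb P p.1)
    (T1 : Set (Function.End (MvPolynomial X K)))
    (hT1 : T1 = T1B S) :
    List.TFAE
      [IsGrobnerB P {x : MvPolynomial X K |
          ∃ p ∈ S, x = MvPolynomial.monomial p.1 (1 : K) - p.2} (ISB T1),
        ∀ s1 ∈ S, ∀ s2 ∈ S, ∃ t ∈ Tclos T1, t (Zpol s1 s2) = 0,
        ∀ s1 ∈ S, ∀ s2 ∈ S, s1.1 ⊓ s2.1 ≠ 0 →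
          ∃ t ∈ Tclos T1, t (Zpol s1 s2) = 0] := by
  subst hT1
  have hS2 : ∀ p ∈ S, ∀ k, MvPolynomial.coeff k p.2 ≠ 0 → P k p.1 :=
    fun p hp k hk => dsm_coeff (hS p hp) hk
  tfae_have 1 → 2 := by
    intro hGB s1 h1 s2 h2
    have hZ : Zpol s1 s2 ∈ ISB (T1B S) := by
      rw [Zpol_eq]
      exact sub_mem_ISB (term_mem_ISB h2 _) (term_mem_ISB h1 _)
    exact reduce0 hPirr hPtrans hPtotal hPwf hPmul hS2 hGB (Zpol s1 s2) hZ
  tfae_have 2 → 3 := fun h s1 h1 s2 h2 _ => h s1 h1 s2 h2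
  tfae_have 3 → 1 := by
    intro hcrit
    refine ⟨?_, ?_, ?_⟩
    · rintro g ⟨p, hp, rfl⟩
      exact PMonic_Gof (hS p hp)
    · rintro m g ⟨p, hp, rfl⟩
      exact term_mem_ISB hp m
    · intro a ha m hm
      obtain ⟨s, hs, lam, hlm⟩ :=
        grobner_head hPirr hPtrans hPtotal hPwf hPmul hS2 hcrit a ha m hm
      refine ⟨Gof s, ⟨s, hs, rfl⟩, lam, s.1, LMb_Gof hPirr hPtrans (hS2 s hs), ?_⟩
      rw [MvPolynomial.monomial_mul, one_mul, hlm]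
  tfae_finish
end

section
/- Let V be a monoid under composition of 𝓡-module endomorphisms of M, and let P be a well-founded partial order on Y such that every v ∈ V correlates P to itself. If G ⊆ M is a P-monic V-Gröbner basis of a V-ideal N ⊆ M, then G is a V-ideal basis of N, i.e. N equals the 𝓡-submodule of M generated by {v(g) : v ∈ V, g ∈ G}. If furthermore T1(S) is the set of simple reductions constructed from the rule set S = {(lm_P(g), lm_P(g) − g) : g ∈ G}, then I(S) = N and for every a ∈ N there exists t ∈ T(S) with t(a) = 0. -/
open Set Pointwise

/-- The simple reductions determined by a monoid of module endomorphisms `V`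
and a rule set `S`: `t_{v,(μ,a)}(b) = b − f_{v(μ)}(b) • (v(μ) − v(a))`,
defined whenever `v(μ)` is again a basis element. -/
def T1S {ι R M : Type*} [Ring R] [AddCommGroup M] [Module R M]
    (bY : Module.Basis ι R M) (V : Set (Module.End R M)) (S : Set (ι × M)) :
    Set (Function.End M) :=
  {t | ∃ v ∈ V, ∃ p ∈ S, ∃ j : ι, v (bY p.1) = bY j ∧
    t = fun b => b - bY.repr b j • (v (bY p.1) - v p.2)}

def IrrM {α : Type*} (T1 : Set (Function.End α)) : Set α :=
  {a | ∀ t ∈ Tclos T1, t a = a}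

/-- The additive subgroup generated by `{a − t(a)}` (an `R`-submodule). -/
def ISM {M : Type*} [AddCommGroup M] (T1 : Set (Function.End M)) : Set M :=
  (AddSubgroup.closure {x : M | ∃ a : M, ∃ t ∈ Tclos T1, x = a - t a} : Set M)

/-- The down-set module: the span of the basis elements strictly below `j`. -/
def DSMm {ι R M : Type*} [Ring R] [AddCommGroup M] [Module R M]
    (bY : Module.Basis ι R M) (P : ι → ι → Prop) (j : ι) : Set M :=
  (Submodule.span R (bY '' {k | P k j}) : Set M)

def DISm {ι R M : Type*} [Ring R] [AddCommGroup M] [Module R M]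
    (bY : Module.Basis ι R M) (P : ι → ι → Prop) (T1 : Set (Function.End M)) (j : ι) : Set M :=
  (Submodule.span R {x : M | ∃ k : ι, P k j ∧ ∃ t ∈ T1, x = bY k - t (bY k)} : Set M)

def suppS {ι R M : Type*} [Ring R] [AddCommGroup M] [Module R M]
    (bY : Module.Basis ι R M) (a : M) : Set ι :=
  {j | bY.repr a j ≠ 0}

/-- The set of `P`-leading monomials (maximal elements of the support). -/
def LMs {ι R M : Type*} [Ring R] [AddCommGroup M] [Module R M]
    (bY : Module.Basis ι R M) (P : ι → ι → Prop) (a : M) : Set ι :=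
  {j | j ∈ suppS bY a ∧ ∀ k ∈ suppS bY a, ¬ P j k}

def PMonic {ι R M : Type*} [Ring R] [AddCommGroup M] [Module R M]
    (bY : Module.Basis ι R M) (P : ι → ι → Prop) (g : M) : Prop :=
  ∃ j : ι, g - bY j ∈ DSMm bY P j

/-- `G` is a `P`-monic `V`-Gröbner basis of `N`. -/
def IsGrobner {ι R M : Type*} [Ring R] [AddCommGroup M] [Module R M]
    (bY : Module.Basis ι R M) (P : ι → ι → Prop) (V : Set (Module.End R M))
    (G : Set M) (N : Set M) : Prop :=
  (∀ g ∈ G, PMonic bY P g) ∧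
  (∀ v ∈ V, ∀ g ∈ G, v g ∈ N) ∧
  (∀ a ∈ N, ∀ j ∈ LMs bY P a, ∃ g ∈ G, ∃ v ∈ V, ∃ k : ι,
    LMs bY P g = {k} ∧ bY j = v (bY k))

lemma mem_DSMm_iff {ι R M : Type*} [Ring R] [AddCommGroup M] [Module R M]
    (bY : Module.Basis ι R M) (P : ι → ι → Prop) (j : ι) (x : M) :
    x ∈ DSMm bY P j ↔ ∀ l, bY.repr x l ≠ 0 → P l j := by
  show x ∈ Submodule.span R (bY '' {k | P k j}) ↔ _
  rw [Module.Basis.mem_span_image]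
  constructor
  · intro h l hl
    exact h (by simpa [Finsupp.mem_support_iff] using hl)
  · intro h l hl
    exact h l (by simpa [Finsupp.mem_support_iff] using hl)

lemma monic_key {ι R M : Type*} [Ring R] [AddCommGroup M] [Module R M]
    (bY : Module.Basis ι R M) (P : ι → ι → Prop)
    (hPirr : ∀ j, ¬ P j j)
    {g : M} (hm : PMonic bY P g) {k : ι} (hLM : LMs bY P g = {k}) :
    bY.repr g k = 1 ∧ ∀ l, bY.repr (g - bY k) l ≠ 0 → P l k := by
  obtain ⟨j, hj⟩ := hm
  have hj' : ∀ l, bY.repr (g - bY j) l ≠ 0 → P l j := (mem_DSMm_iff bY P j _).1 hj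
  have hkLM : k ∈ LMs bY P g := by rw [hLM]; exact Set.mem_singleton k
  have hk0 : bY.repr g k ≠ 0 := hkLM.1
  have h10 : (1 : R) ≠ 0 := by
    intro h1
    exact hk0 (by
      calc bY.repr g k = bY.repr g k * 1 := (mul_one _).symm
        _ = 0 := by rw [h1, mul_zero])
  have hgj : bY.repr g j = 1 := by
    have h0 : bY.repr (g - bY j) j = 0 := by
      by_contra h; exact hPirr j (hj' j h)
    rw [map_sub, Finsupp.sub_apply, Module.Basis.repr_self, Finsupp.single_eq_same,
      sub_eq_zero] at h0
    exact h0
  have hkj : k = j := by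
    by_contra hne
    have h1 : bY.repr (g - bY j) k ≠ 0 := by
      rw [map_sub, Finsupp.sub_apply, Module.Basis.repr_self,
        Finsupp.single_eq_of_ne hne, sub_zero]
      exact hk0
    exact hkLM.2 j (show bY.repr g j ≠ 0 by rw [hgj]; exact h10) (hj' k h1)
  subst hkj
  exact ⟨hgj, hj'⟩

theorem grobner_basis_is_ideal_basis
    {ι R M : Type*} [Ring R] [AddCommGroup M] [Module R M]
    (bY : Module.Basis ι R M)
    (P : ι → ι → Prop)
    (hPirr : ∀ j, ¬ P j j)
    (hPtrans : ∀ j k l, P j k → P k l → P j l)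
    (hPwf : WellFounded P)
    (V : Set (Module.End R M))
    (hVone : (1 : Module.End R M) ∈ V)
    (hVmul : ∀ v1 ∈ V, ∀ v2 ∈ V, v1 * v2 ∈ V)
    (hVcorr : ∀ v ∈ V, ∀ j k : ι, v (bY j) = bY k →
      ∀ x ∈ DSMm bY P j, v x ∈ DSMm bY P k)
    (N : Submodule R M)
    (hNV : ∀ v ∈ V, ∀ a ∈ N, v a ∈ N)
    (G : Set M)
    (hG : IsGrobner bY P V G (N : Set M))
    (S : Set (ι × M))
    (hS : S = {p : ι × M | ∃ g ∈ G, ∃ j : ι, LMs bY P g = {j} ∧ p = (j, bY j - g)})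
    (T1 : Set (Function.End M))
    (hT1 : T1 = T1S bY V S) :
    (N : Set M) = (Submodule.span R {x : M | ∃ v ∈ V, ∃ g ∈ G, x = v g} : Set M) ∧
    ISM T1 = (N : Set M) ∧
    (∀ a ∈ N, ∃ t ∈ Tclos T1, t a = 0) := by
  classical
  obtain ⟨hGmonic, hGin, hGlm⟩ := hG
  -- every simple reduction changes `a` by a left multiple of some `v g`
  have hdiff : ∀ t ∈ T1, ∀ a : M, ∃ c : R, ∃ v ∈ V, ∃ g ∈ G, a - t a = c • v g := by
    intro t ht a
    rw [hT1] at ht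
    obtain ⟨v, hv, p, hp, j, hvp, rfl⟩ := ht
    rw [hS] at hp
    obtain ⟨g, hg, k, hLMg, rfl⟩ := hp
    refine ⟨bY.repr a j, v, hv, g, hg, ?_⟩
    show a - (a - bY.repr a j • (v (bY k) - v (bY k - g))) = bY.repr a j • v g
    rw [map_sub, sub_sub_cancel, sub_sub_cancel]
  -- composite reductions change `a` within any submodule containing all `v g`
  have hsub : ∀ (Q : Submodule R M), (∀ v ∈ V, ∀ g ∈ G, v g ∈ Q) →
      ∀ t ∈ Submonoid.closure T1, ∀ a : M, a - t a ∈ Q := by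
    intro Q hQ t ht
    induction ht using Submonoid.closure_induction with
    | mem t ht =>
      intro a
      obtain ⟨c, v, hv, g, hg, he⟩ := hdiff t ht a
      rw [he]
      exact Q.smul_mem c (hQ v hv g hg)
    | one =>
      intro a
      rw [show (1 : Function.End M) a = a from rfl, sub_self]
      exact Q.zero_mem
    | mul x y hx hy ihx ihy =>
      intro a
      have hxy : a - (x * y) a = (a - y a) + (y a - x (y a)) :=
        (sub_add_sub_cancel a (y a) (x (y a))).symm
      rw [hxy]
      exact Q.add_mem (ihy a) (ihx (y a))
  -- rank function
  haveI : IsWellFounded ι P := ⟨hPwf⟩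
  set ρ : ι → Ordinal := IsWellFounded.rank P with hρdef
  have hρlt : ∀ {j k}, P j k → ρ j < ρ k := fun h => IsWellFounded.rank_lt_of_rel h
  have wf : WellFounded (Prod.Lex ((· < ·) : Ordinal → Ordinal → Prop)
      ((· < ·) : ℕ → ℕ → Prop)) :=
    WellFounded.prod_lex wellFounded_lt wellFounded_lt
  -- the key reduction-to-zero lemma
  have key : ∀ pr : Ordinal × ℕ, ∀ a ∈ N,
      (∀ l, bY.repr a l ≠ 0 → ρ l ≤ pr.1) →
      ((bY.repr a).support.filter (fun l => ρ l = pr.1)).card ≤ pr.2 →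
      ∃ t ∈ Submonoid.closure T1, t a = 0 := by
    intro pr
    induction pr using wf.induction with
    | _ pr IH =>
    obtain ⟨r, n⟩ := pr
    intro a haN h1 h2
    by_cases ha0 : a = 0
    · exact ⟨1, one_mem _, by rw [ha0]; rfl⟩
    have hsuppne : ((bY.repr a).support).Nonempty := by
      rw [Finsupp.support_nonempty_iff]
      intro h
      exact ha0 (bY.repr.map_eq_zero_iff.1 h)
    obtain ⟨j, hjsupp, hjmax⟩ := Finset.exists_max_image _ ρ hsuppne
    have hja : bY.repr a j ≠ 0 := Finsupp.mem_support_iff.1 hjsupp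
    have hjle : ρ j ≤ r := h1 j hja
    rcases lt_or_eq_of_le hjle with hlt | heq
    · -- all ranks are below `r`: restart at the actual top rank
      exact IH (ρ j, ((bY.repr a).support.filter (fun l => ρ l = ρ j)).card)
        (Prod.Lex.left _ _ hlt) a haN
        (fun l hl => hjmax l (Finsupp.mem_support_iff.2 hl)) le_rfl
    · -- `j` has top rank `r`; it is a leading monomial of `a`
      have hjLM : j ∈ LMs bY P a := by
        refine ⟨hja, ?_⟩
        intro l hl hPl
        exact absurd (hρlt hPl) (not_lt.2 (hjmax l (Finsupp.mem_support_iff.2 hl)))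
      obtain ⟨g, hg, v, hv, k, hLMg, hjk⟩ := hGlm a haN j hjLM
      obtain ⟨hgk1, hglow⟩ := monic_key bY P hPirr (hGmonic g hg) hLMg
      set w := v g with hwdef
      have hgsplit : bY k + (g - bY k) = g := by abel
      have hw1 : w = bY j + v (g - bY k) := by
        rw [hwdef, hjk, ← map_add, hgsplit]
      have hlow : ∀ l, bY.repr (v (g - bY k)) l ≠ 0 → P l j := by
        intro l hl
        exact (mem_DSMm_iff bY P j _).1
          (hVcorr v hv k j hjk.symm _ ((mem_DSMm_iff bY P k _).2 hglow)) l hl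
      have hvgkj : bY.repr (v (g - bY k)) j = 0 := by
        by_contra h; exact hPirr j (hlow j h)
      have hwj : bY.repr w j = 1 := by
        rw [hw1, map_add, Finsupp.add_apply, Module.Basis.repr_self, Finsupp.single_eq_same,
          hvgkj, add_zero]
      have hwl : ∀ l, l ≠ j → bY.repr w l ≠ 0 → P l j := by
        intro l hlj hl
        apply hlow l
        intro h0
        apply hl
        rw [hw1, map_add, Finsupp.add_apply, Module.Basis.repr_self,
          Finsupp.single_eq_of_ne hlj, h0, add_zero]
      set c := bY.repr a j with hc
      have hpS : (k, bY k - g) ∈ S := by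
        rw [hS]; exact ⟨g, hg, k, hLMg, rfl⟩
      set t1 : Function.End M := fun b => b - bY.repr b j • (v (bY k) - v (bY k - g))
        with ht1def
      have ht1T : t1 ∈ T1 := by
        rw [hT1]
        exact ⟨v, hv, (k, bY k - g), hpS, j, hjk.symm, rfl⟩
      have hvg : v (bY k) - v (bY k - g) = w := by
        rw [hwdef, map_sub, sub_sub_cancel]
      have ht1a : t1 a = a - c • w := by
        rw [ht1def]
        show a - bY.repr a j • (v (bY k) - v (bY k - g)) = a - c • w
        rw [hvg, hc]
      have ha'N : a - c • w ∈ N := sub_mem haN (N.smul_mem c (hGin v hv g hg))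
      have hrepr' : ∀ l, bY.repr (a - c • w) l = bY.repr a l - c * bY.repr w l := by
        intro l
        rw [map_sub, map_smul, Finsupp.sub_apply, Finsupp.smul_apply, smul_eq_mul]
      have ha'j : bY.repr (a - c • w) j = 0 := by
        rw [hrepr' j, hwj, mul_one, hc, sub_self]
      have ha'supp : ∀ l, bY.repr (a - c • w) l ≠ 0 →
          l ≠ j ∧ (bY.repr a l ≠ 0 ∨ P l j) := by
        intro l hl
        have hlj : l ≠ j := by rintro rfl; exact hl ha'j
        refine ⟨hlj, ?_⟩
        by_cases hal : bY.repr a l = 0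
        · right
          apply hwl l hlj
          intro hw0
          apply hl
          rw [hrepr' l, hal, hw0, mul_zero, sub_zero]
        · exact Or.inl hal
      have h1' : ∀ l, bY.repr (a - c • w) l ≠ 0 → ρ l ≤ r := by
        intro l hl
        obtain ⟨hlj, hca⟩ := ha'supp l hl
        rcases hca with h | h
        · exact h1 l h
        · rw [← heq]; exact le_of_lt (hρlt h)
      have hjmem : j ∈ (bY.repr a).support.filter (fun l => ρ l = r) :=
        Finset.mem_filter.2 ⟨hjsupp, heq⟩
      have hcard : ((bY.repr (a - c • w)).support.filter (fun l => ρ l = r)).card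
          ≤ n - 1 := by
        have hsub2 : (bY.repr (a - c • w)).support.filter (fun l => ρ l = r) ⊆
            ((bY.repr a).support.filter (fun l => ρ l = r)).erase j := by
          intro l hl
          rw [Finset.mem_filter, Finsupp.mem_support_iff] at hl
          obtain ⟨hl0, hlρ⟩ := hl
          obtain ⟨hlj, hca⟩ := ha'supp l hl0
          rw [Finset.mem_erase, Finset.mem_filter, Finsupp.mem_support_iff]
          refine ⟨hlj, ?_, hlρ⟩
          rcases hca with h | h
          · exact h
          · exfalso
            have hρl := hρlt h
            rw [hlρ, heq] at hρl
            exact lt_irrefl _ hρl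
        calc ((bY.repr (a - c • w)).support.filter (fun l => ρ l = r)).card
            ≤ (((bY.repr a).support.filter (fun l => ρ l = r)).erase j).card :=
              Finset.card_le_card hsub2
          _ = ((bY.repr a).support.filter (fun l => ρ l = r)).card - 1 :=
              Finset.card_erase_of_mem hjmem
          _ ≤ n - 1 := Nat.sub_le_sub_right h2 1
      have hn1 : 1 ≤ n := le_trans (Finset.card_pos.2 ⟨j, hjmem⟩) h2
      obtain ⟨t2, ht2, ht2a⟩ := IH (r, n - 1)
        (Prod.Lex.right _ (Nat.sub_lt hn1 one_pos)) (a - c • w) ha'N h1' hcard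
      refine ⟨t2 * t1, mul_mem ht2 (Submonoid.subset_closure ht1T), ?_⟩
      show t2 (t1 a) = 0
      rw [ht1a, ht2a]
  -- reduction to zero for every element of N
  have hred : ∀ a ∈ N, ∃ t ∈ Submonoid.closure T1, t a = 0 := by
    intro a ha
    by_cases ha0 : a = 0
    · exact ⟨1, one_mem _, by rw [ha0]; rfl⟩
    have hsuppne : ((bY.repr a).support).Nonempty := by
      rw [Finsupp.support_nonempty_iff]
      intro h
      exact ha0 (bY.repr.map_eq_zero_iff.1 h)
    obtain ⟨j, hjsupp, hjmax⟩ := Finset.exists_max_image _ ρ hsuppne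
    exact key (ρ j, ((bY.repr a).support.filter (fun l => ρ l = ρ j)).card) a ha
      (fun l hl => hjmax l (Finsupp.mem_support_iff.2 hl)) le_rfl
  -- assemble the three conclusions
  refine ⟨?_, ?_, ?_⟩
  · apply Set.Subset.antisymm
    · intro a ha
      obtain ⟨t, ht, hta⟩ := hred a ha
      have hmem := hsub (Submodule.span R {x : M | ∃ v ∈ V, ∃ g ∈ G, x = v g})
        (fun v hv g hg => Submodule.subset_span ⟨v, hv, g, hg, rfl⟩) t ht a
      rw [hta, sub_zero] at hmem
      exact hmem
    · intro x hx
      have hle : Submodule.span R {x : M | ∃ v ∈ V, ∃ g ∈ G, x = v g} ≤ N := by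
        rw [Submodule.span_le]
        rintro y ⟨v, hv, g, hg, rfl⟩
        exact hGin v hv g hg
      exact hle hx
  · apply Set.Subset.antisymm
    · intro x hx
      have hle : AddSubgroup.closure {x : M | ∃ a : M, ∃ t ∈ Tclos T1, x = a - t a}
          ≤ N.toAddSubgroup := by
        rw [AddSubgroup.closure_le]
        rintro y ⟨a, t, ht, rfl⟩
        exact hsub N hGin t ht a
      exact hle hx
    · intro a ha
      obtain ⟨t, ht, hta⟩ := hred a ha
      exact AddSubgroup.subset_closure ⟨a, t, ht, by rw [hta, sub_zero]⟩
  · intro a ha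
    obtain ⟨t, ht, hta⟩ := hred a ha
    exact ⟨t, ht, hta⟩
end

section
/- Assume T(S) is equicontinuous and every element of T(S) is compatible with a partial order P on Y. If P satisfies the topological descending chain condition, then Per(S) = M̄, i.e. every element of M̄ is persistently reducible. -/
open Set Filter Topology Pointwise

section Aux

variable {M : Type*} [AddCommGroup M]

@[simp] lemma end_mul_apply {s t : AddMonoid.End M} (a : M) : (s * t) a = s (t a) := rfl

@[simp] lemma end_one_apply (a : M) : (1 : AddMonoid.End M) a = a := rfl

lemma one_mem_TS (T1 : Set (AddMonoid.End M)) : (1 : AddMonoid.End M) ∈ TS T1 :=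
  Submonoid.one_mem _

lemma mul_mem_TS {T1 : Set (AddMonoid.End M)} {s t : AddMonoid.End M}
    (hs : s ∈ TS T1) (ht : t ∈ TS T1) : s * t ∈ TS T1 :=
  Submonoid.mul_mem _ hs ht

lemma stuck_comp {T1 : Set (AddMonoid.End M)} {N : Set M} {a : M}
    (h : Stuck T1 N a) {t : AddMonoid.End M} (ht : t ∈ TS T1) : Stuck T1 N (t a) := by
  intro t' ht'
  have := h (t' * t) (mul_mem_TS ht' ht)
  simpa [end_mul_apply] using this

lemma zero_mem_IrrS (T1 : Set (AddMonoid.End M)) : (0 : M) ∈ IrrS T1 :=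
  fun t _ => map_zero t

lemma add_mem_IrrS {T1 : Set (AddMonoid.End M)} {a b : M}
    (ha : a ∈ IrrS T1) (hb : b ∈ IrrS T1) : a + b ∈ IrrS T1 := by
  intro t ht; rw [map_add, ha t ht, hb t ht]

lemma neg_mem_IrrS {T1 : Set (AddMonoid.End M)} {a : M}
    (ha : a ∈ IrrS T1) : -a ∈ IrrS T1 := by
  intro t ht; rw [map_neg, ha t ht]

lemma zero_mem_perE (T1 : Set (AddMonoid.End M)) (ε : AddSubgroup M) :
    (0 : M) ∈ PerE T1 (ε : Set M) := by
  intro t1 ht1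
  exact ⟨1, one_mem_TS T1, 0, zero_mem_IrrS T1, fun t ht => by simpa using ε.zero_mem⟩

lemma add_mem_perE {T1 : Set (AddMonoid.End M)} {ε : AddSubgroup M} {a a' : M}
    (ha : a ∈ PerE T1 (ε : Set M)) (ha' : a' ∈ PerE T1 (ε : Set M)) :
    a + a' ∈ PerE T1 (ε : Set M) := by
  intro t1 ht1
  obtain ⟨t2, ht2, b, hb, hstuck⟩ := ha t1 ht1
  obtain ⟨t3, ht3, b', hb', hstuck'⟩ := ha' (t2 * t1) (mul_mem_TS ht2 ht1)
  refine ⟨t3 * t2, mul_mem_TS ht3 ht2, b + b', add_mem_IrrS hb hb', fun t ht => ?_⟩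
  have h1 := stuck_comp hstuck ht3 t ht
  have h2 := hstuck' t ht
  simp only [end_mul_apply, Set.mem_setOf_eq] at h1 h2 ⊢
  have : t (t3 (t2 (t1 (a + a')))) - (b + b') =
      (t (t3 (t2 (t1 a))) - b) + (t (t3 (t2 (t1 a'))) - b') := by
    simp only [map_add]
    abel
  rw [this]
  exact ε.add_mem h1 h2

lemma neg_mem_perE {T1 : Set (AddMonoid.End M)} {ε : AddSubgroup M} {a : M}
    (ha : a ∈ PerE T1 (ε : Set M)) : -a ∈ PerE T1 (ε : Set M) := by
  intro t1 ht1
  obtain ⟨t2, ht2, b, hb, hstuck⟩ := ha t1 ht1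
  refine ⟨t2, ht2, -b, neg_mem_IrrS hb, fun t ht => ?_⟩
  have h1 := hstuck t ht
  simp only [Set.mem_setOf_eq] at h1 ⊢
  have : t (t2 (t1 (-a))) - (-b) = -(t (t2 (t1 a)) - b) := by
    simp only [map_neg]; abel
  rw [this]
  exact ε.neg_mem h1

lemma r_mem_perE {T1 R : Set (AddMonoid.End M)} {ε : AddSubgroup M}
    (hcomm : ∀ t ∈ TS T1, ∀ r ∈ R, ∀ x : M, t (r x) = r (t x))
    (hRsm : ∀ r ∈ R, ∀ x ∈ ε, r x ∈ ε)
    {a : M} (ha : a ∈ PerE T1 (ε : Set M)) {r : AddMonoid.End M} (hr : r ∈ R) :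
    r a ∈ PerE T1 (ε : Set M) := by
  intro t1 ht1
  obtain ⟨t2, ht2, b, hb, hstuck⟩ := ha t1 ht1
  have hrb : r b ∈ IrrS T1 := fun t ht => by rw [hcomm t ht r hr b, hb t ht]
  refine ⟨t2, ht2, r b, hrb, fun t ht => ?_⟩
  have h1 := hstuck t ht
  simp only [Set.mem_setOf_eq] at h1 ⊢
  have : t (t2 (t1 (r a))) - r b = r (t (t2 (t1 a)) - b) := by
    rw [hcomm t1 ht1 r hr, hcomm t2 ht2 r hr, hcomm t ht r hr, map_sub]
  rw [this]
  exact hRsm r hr _ h1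

lemma coset_mem_perE {T1 : Set (AddMonoid.End M)} {ε δ : AddSubgroup M}
    (hed : ∀ t ∈ TS T1, ∀ x ∈ δ, t x ∈ ε)
    {a x : M} (ha : a ∈ PerE T1 (ε : Set M)) (hx : x - a ∈ δ) :
    x ∈ PerE T1 (ε : Set M) := by
  intro t1 ht1
  obtain ⟨t2, ht2, b, hb, hstuck⟩ := ha t1 ht1
  refine ⟨t2, ht2, b, hb, fun t ht => ?_⟩
  have h1 := hstuck t ht
  have h2 : (t * t2 * t1) (x - a) ∈ ε :=
    hed _ (mul_mem_TS (mul_mem_TS ht ht2) ht1) _ hx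
  simp only [Set.mem_setOf_eq] at h1 ⊢
  have : t (t2 (t1 x)) - b = (t (t2 (t1 a)) - b) + (t * t2 * t1) (x - a) := by
    simp only [end_mul_apply, map_sub]
    abel
  rw [this]
  exact ε.add_mem h1 h2

end Aux
theorem persistently_reducible_everywhere
    {M : Type*} [AddCommGroup M] [UniformSpace M] [IsUniformAddGroup M]
    [CompleteSpace M] [T2Space M]
    (B : ℕ → AddSubgroup M)
    (hBopen : ∀ n, IsOpen (B n : Set M))
    (hBanti : ∀ n, (B (n + 1) : Set M) ⊆ (B n : Set M))
    (hBbasis : (nhds (0 : M)).HasBasis (fun _ : ℕ => True) (fun n => (B n : Set M)))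
    (hBsep : ⋂ n, (B n : Set M) = {0})
    (R : Set (AddMonoid.End M))
    (hRcont : ∀ r ∈ R, Continuous r)
    (hRsmall : ∀ r ∈ R, ∀ n : ℕ, ∀ a ∈ B n, r a ∈ B n)
    (T1 : Set (AddMonoid.End M))
    (hT1cont : ∀ t ∈ T1, Continuous t)
    (hT1comm : ∀ t ∈ T1, ∀ r ∈ R, ∀ a : M, t (r a) = r (t a))
    (Y : Set M)
    (hYspan : Cspan R Y = (Set.univ : Set M))
    (P : M → M → Prop)
    (hPirr : ∀ μ, ¬ P μ μ)
    (hPtrans : ∀ μ ν ρ, P μ ν → P ν ρ → P μ ρ)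
    (hTDCC : TDCC Y P)
    (hcompat : ∀ t ∈ TS T1, Compatible R Y P t)
    (hequi : Equicont T1 B) :
    Per T1 B = Set.univ := by
  classical
  -- every element of TS commutes with every element of R
  have hcomm : ∀ t ∈ TS T1, ∀ r ∈ R, ∀ x : M, t (r x) = r (t x) := by
    intro t ht
    induction ht using Submonoid.closure_induction with
    | mem s hs => exact hT1comm s hs
    | one => intro r _ x; simp
    | mul s u hs hu ihs ihu =>
      intro r hr x
      simp only [end_mul_apply]
      rw [ihu r hr x, ihs r hr (u x)]
  -- PerE T1 (B n) is open
  have hopen : ∀ n, IsOpen (PerE T1 ((B n : Set M))) := by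
    intro n
    obtain ⟨m, hm⟩ := hequi n
    rw [isOpen_iff_forall_mem_open]
    intro a ha
    refine ⟨(a + ·) '' (B m : Set M), ?_, ?_, ⟨0, (B m).zero_mem, by simp⟩⟩
    · rintro _ ⟨x, hx, rfl⟩
      exact coset_mem_perE (fun t ht y hy => hm t ht y hy) ha (by simpa using hx)
    · exact (Homeomorph.addLeft a).isOpenMap _ (hBopen m)
  -- Per as a subgroup
  have hPerE_eq : Per T1 B = ⋂ n, PerE T1 ((B n : Set M)) := rfl
  have hPer_zero : (0 : M) ∈ Per T1 B :=
    Set.mem_iInter.mpr fun n => zero_mem_perE T1 (B n)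
  have hPer_add : ∀ a a' : M, a ∈ Per T1 B → a' ∈ Per T1 B → a + a' ∈ Per T1 B := by
    intro a a' ha ha'
    exact Set.mem_iInter.mpr fun n =>
      add_mem_perE (Set.mem_iInter.mp ha n) (Set.mem_iInter.mp ha' n)
  have hPer_neg : ∀ a : M, a ∈ Per T1 B → -a ∈ Per T1 B := by
    intro a ha
    exact Set.mem_iInter.mpr fun n => neg_mem_perE (Set.mem_iInter.mp ha n)
  have hPer_r : ∀ r ∈ R, ∀ a ∈ Per T1 B, r a ∈ Per T1 B := by
    intro r hr a ha
    exact Set.mem_iInter.mpr fun n =>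
      r_mem_perE hcomm (fun r' hr' => hRsmall r' hr' n) (Set.mem_iInter.mp ha n) hr
  -- each PerE T1 (B n) is closed, being an open subgroup
  have hclosed : ∀ n, IsClosed (PerE T1 ((B n : Set M))) := by
    intro n
    let H : AddSubgroup M :=
      { carrier := PerE T1 ((B n : Set M))
        zero_mem' := zero_mem_perE T1 (B n)
        add_mem' := fun ha ha' => add_mem_perE ha ha'
        neg_mem' := fun ha => neg_mem_perE ha }
    have : IsOpen (H : Set M) := hopen n
    exact AddSubgroup.isClosed_of_isOpen H this
  -- PerE T1 (B n) absorbs Cspan of any subset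
  have hPerEFam : ∀ n, ∀ Z : Set M, Z ⊆ PerE T1 ((B n : Set M)) →
      Cspan R Z ⊆ PerE T1 ((B n : Set M)) := by
    intro n Z hZ
    apply Set.sInter_subset_of_mem
    refine ⟨hZ, hclosed n, ?_, ?_⟩
    · exact ⟨{ carrier := PerE T1 ((B n : Set M))
               zero_mem' := zero_mem_perE T1 (B n)
               add_mem' := fun ha ha' => add_mem_perE ha ha'
               neg_mem' := fun ha => neg_mem_perE ha }, rfl⟩
    · intro r hr a ha
      exact r_mem_perE hcomm (fun r' hr' => hRsmall r' hr' n) ha hr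
  -- Y is contained in each PerE T1 (B n)
  have hY : ∀ n, Y ⊆ PerE T1 ((B n : Set M)) := by
    intro n
    obtain ⟨m, hm⟩ := hequi n
    by_contra hnot
    obtain ⟨μ0, hμ0Y, hμ0⟩ := Set.not_subset.mp hnot
    -- descent step
    have step : ∀ μ ∈ Y, μ ∉ PerE T1 ((B n : Set M)) →
        ∃ ν, ν ∈ Y ∧ P ν μ ∧ ν ∉ PerE T1 ((B n : Set M)) := by
      intro μ hμ hμn
      by_contra h
      push_neg at h
      apply hμn
      have hDSM : DSM R Y P μ ⊆ PerE T1 ((B n : Set M)) := by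
        apply hPerEFam n
        rintro ν ⟨hν, hP⟩
        exact h ν hν hP
      intro t1 ht1
      rcases hcompat t1 ht1 μ hμ with h1 | h1
      · by_cases hirr : ∀ t ∈ TS T1, t μ = μ
        · refine ⟨1, one_mem_TS T1, μ, hirr, fun t ht => ?_⟩
          simp [h1, hirr t ht, (B n).zero_mem]
        · push_neg at hirr
          obtain ⟨t', ht', hne⟩ := hirr
          rcases hcompat t' ht' μ hμ with h2 | h2
          · exact absurd h2 hne
          · obtain ⟨t2, ht2, b, hb, hstuck⟩ := hDSM h2 1 (one_mem_TS T1)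
            refine ⟨t2 * t', mul_mem_TS ht2 ht', b, hb, fun t ht => ?_⟩
            have h3 := hstuck t ht
            simpa [h1, end_mul_apply] using h3
      · obtain ⟨t2, ht2, b, hb, hstuck⟩ := hDSM h1 1 (one_mem_TS T1)
        refine ⟨t2, ht2, b, hb, fun t ht => ?_⟩
        have h3 := hstuck t ht
        simpa [end_mul_apply] using h3
    -- build a descending sequence of bad elements
    have hstep : ∀ x : {μ : M // μ ∈ Y ∧ μ ∉ PerE T1 ((B n : Set M))},
        ∃ y : {μ : M // μ ∈ Y ∧ μ ∉ PerE T1 ((B n : Set M))}, P y.1 x.1 := by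
      rintro ⟨μ, hμ, hn'⟩
      obtain ⟨ν, hν, hP, hn''⟩ := step μ hμ hn'
      exact ⟨⟨ν, hν, hn''⟩, hP⟩
    choose f hf using hstep
    let g : ℕ → {μ : M // μ ∈ Y ∧ μ ∉ PerE T1 ((B n : Set M))} :=
      fun k => f^[k] ⟨μ0, hμ0Y, hμ0⟩
    have hgsucc : ∀ k, g (k + 1) = f (g k) := fun k =>
      Function.iterate_succ_apply' f k _
    have htend : Filter.Tendsto (fun k => (g k).1) Filter.atTop (nhds 0) := by
      refine hTDCC _ (fun k => (g k).2.1) (fun k => ?_)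
      rw [hgsucc k]
      exact hf (g k)
    have hmem : ∀ᶠ k in Filter.atTop, (g k).1 ∈ (B m : Set M) :=
      htend (hBbasis.mem_of_mem trivial)
    obtain ⟨k, hk⟩ := hmem.exists
    apply (g k).2.2
    exact coset_mem_perE (fun t ht y hy => hm t ht y hy)
      (zero_mem_perE T1 (B n)) (by simpa using hk)
  -- conclude
  have hYPer : Y ⊆ Per T1 B := fun a ha => Set.mem_iInter.mpr fun n => hY n ha
  have hsub : Cspan R Y ⊆ Per T1 B := by
    apply Set.sInter_subset_of_mem
    refine ⟨hYPer, isClosed_iInter hclosed, ?_, hPer_r⟩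
    exact ⟨{ carrier := Per T1 B
             zero_mem' := hPer_zero
             add_mem' := fun ha ha' => hPer_add _ _ ha ha'
             neg_mem' := fun ha => hPer_neg _ ha }, rfl⟩
  rw [hYspan] at hsub
  exact Set.eq_univ_of_univ_subset hsub
end
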